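/- arXiv:2010.15212 — 5 statements merged into one kernel-verified Lean document; each statement's English description precedes it below -/
import Mathlib

section
/- The Marshall–Olkin bivariate exponential distribution with parameters α¹,α²,α³ > 0 does not admit a density with respect to Lebesgue measure on ℝ²: its law has a nonzero singular component supported on the diagonal {(x,x) : x ≥ 0}, with singular part having total mass α³/(α¹+α²+α³). -/
open MeasureTheory Real
open scoped ENNReal

section BVEAux
open Set

lemma int_exp_Ioi (r c : ℝ) (hr : 0 < r) :
    ∫ x in Set.Ioi c, Real.exp (-(r * x)) = Real.exp (-(r * c)) / r := by
  have h := integral_comp_mul_left_Ioi (fun x => Real.exp (-x)) c hr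
  simp only [smul_eq_mul] at h
  rw [show (fun x => Real.exp (-(r * x))) = (fun x => Real.exp (-(r * x))) from rfl]
  calc ∫ x in Set.Ioi c, Real.exp (-(r * x)) = r⁻¹ * ∫ x in Set.Ioi (r * c), Real.exp (-x) := h
    _ = Real.exp (-(r * c)) / r := by rw [integral_exp_neg_Ioi]; ring

lemma integrableOn_exp_Ioi (r c : ℝ) (hr : 0 < r) :
    IntegrableOn (fun x : ℝ => Real.exp (-(r * x))) (Set.Ioi c) := by
  simpa [neg_mul] using exp_neg_integrableOn_Ioi c hr

lemma L1 (r k c : ℝ) (hr : 0 < r) (hk : 0 ≤ k) :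
    ∫⁻ x in Set.Ioi c, ENNReal.ofReal (k * Real.exp (-(r * x)))
      = ENNReal.ofReal (k / r * Real.exp (-(r * c))) := by
  rw [← ofReal_integral_eq_lintegral_ofReal
      (((integrableOn_exp_Ioi r c hr).const_mul k))
      (Filter.Eventually.of_forall fun x => by positivity)]
  rw [integral_const_mul, int_exp_Ioi r c hr]
  congr 1
  ring

lemma L2 (r : ℝ) (hr : 0 < r) (c d : ℝ) (hcd : c ≤ d) :
    ∫⁻ x in Set.Ioc c d, ENNReal.ofReal (r * Real.exp (-(r * x)))
      = ENNReal.ofReal (Real.exp (-(r * c)) - Real.exp (-(r * d))) := by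
  have hint : IntegrableOn (fun x : ℝ => r * Real.exp (-(r * x))) (Set.Ioc c d) :=
    ((integrableOn_exp_Ioi r c hr).mono_set Set.Ioc_subset_Ioi_self).const_mul r
  rw [← ofReal_integral_eq_lintegral_ofReal hint
      (Filter.Eventually.of_forall fun x => by positivity)]
  congr 1
  rw [← intervalIntegral.integral_of_le hcd]
  rw [intervalIntegral.integral_eq_sub_of_hasDerivAt
      (f := fun x => -Real.exp (-(r * x)))
      (fun x _ => ProbabilityTheory.hasDerivAt_neg_exp_mul_exp)
      (by rw [intervalIntegrable_iff, Set.uIoc_of_le hcd]; exact hint)]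
  ring

lemma keyH (p q s t : ℝ) (hp : 0 < p) (hq : 0 < q) :
    ∫⁻ x in Set.Ioi s, ENNReal.ofReal (p * Real.exp (-(p * x)) * Real.exp (-(q * max t x)))
      = ENNReal.ofReal ((Real.exp (-(p * s)) - Real.exp (-(p * max s t))) * Real.exp (-(q * t)))
        + ENNReal.ofReal (p / (p + q) * Real.exp (-((p + q) * max s t))) := by
  set M := max s t with hM
  have hsM : s ≤ M := le_max_left _ _
  have htM : t ≤ M := le_max_right _ _
  have hsplit : Set.Ioi s = Set.Ioc s M ∪ Set.Ioi M := (Set.Ioc_union_Ioi_eq_Ioi hsM).symm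
  have hdisj : Disjoint (Set.Ioc s M) (Set.Ioi M) := Set.Ioc_disjoint_Ioi le_rfl
  rw [hsplit, lintegral_union measurableSet_Ioi hdisj]
  have h1 : ∫⁻ x in Set.Ioc s M, ENNReal.ofReal (p * Real.exp (-(p * x)) * Real.exp (-(q * max t x)))
      = ENNReal.ofReal ((Real.exp (-(p * s)) - Real.exp (-(p * M))) * Real.exp (-(q * t))) := by
    rw [setLIntegral_congr_fun measurableSet_Ioc (
      (fun x hx => by
        have hxt : x ≤ t := by
          rcases le_max_iff.1 hx.2 with h | h
          · exact absurd (hx.1.trans_le h) (lt_irrefl s)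
          · exact h
        show ENNReal.ofReal (p * Real.exp (-(p * x)) * Real.exp (-(q * max t x)))
          = (fun x => ENNReal.ofReal (p * Real.exp (-(p * x))) * ENNReal.ofReal (Real.exp (-(q * t)))) x
        rw [max_eq_left hxt,
          ENNReal.ofReal_mul (by positivity : (0:ℝ) ≤ p * Real.exp (-(p * x)))]))]
    rw [lintegral_mul_const _ (Measurable.ennreal_ofReal (by fun_prop)), L2 p hp s M hsM,
      ← ENNReal.ofReal_mul (by
        have := Real.exp_le_exp.2 (neg_le_neg (mul_le_mul_of_nonneg_left hsM hp.le))
        linarith)]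
  have h2 : ∫⁻ x in Set.Ioi M, ENNReal.ofReal (p * Real.exp (-(p * x)) * Real.exp (-(q * max t x)))
      = ENNReal.ofReal (p / (p + q) * Real.exp (-((p + q) * M))) := by
    rw [setLIntegral_congr_fun measurableSet_Ioi (
      (fun x (hx : M < x) => by
        show _ = ENNReal.ofReal (p * Real.exp (-((p + q) * x)))
        rw [max_eq_right (htM.trans hx.le), mul_assoc, ← Real.exp_add]
        ring_nf))]
    exact L1 (p + q) p M (by positivity) hp.le
  rw [h1, h2]

lemma rect_region (p q s t : ℝ) (hp : 0 < p) (hq : 0 < q) (hs : 0 ≤ s) :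
    ∫⁻ z in Set.Ioi s ×ˢ Set.Ioi t,
        (if 0 < z.1 ∧ z.1 < z.2 then
          ENNReal.ofReal (p * q * Real.exp (-(p * z.1) - q * z.2)) else 0)
        ∂((volume : Measure ℝ).prod (volume : Measure ℝ))
      = ENNReal.ofReal ((Real.exp (-(p * s)) - Real.exp (-(p * max s t))) * Real.exp (-(q * t)))
        + ENNReal.ofReal (p / (p + q) * Real.exp (-((p + q) * max s t))) := by
  have hF : Measurable (fun z : ℝ × ℝ => if 0 < z.1 ∧ z.1 < z.2 then
      ENNReal.ofReal (p * q * Real.exp (-(p * z.1) - q * z.2)) else 0) := by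
    refine Measurable.ite ?_ (by fun_prop) measurable_const
    exact (measurableSet_lt measurable_const measurable_fst).inter
      (measurableSet_lt measurable_fst measurable_snd)
  rw [← Measure.prod_restrict, lintegral_prod _ hF.aemeasurable]
  have hinner : ∀ x ∈ Set.Ioi s,
      (∫⁻ y in Set.Ioi t, (if 0 < x ∧ x < y then
          ENNReal.ofReal (p * q * Real.exp (-(p * x) - q * y)) else 0))
        = ENNReal.ofReal (p * Real.exp (-(p * x)) * Real.exp (-(q * max t x))) := by
    intro x hx
    have hx0 : 0 < x := lt_of_le_of_lt hs hx
    have hfun : (fun y => if 0 < x ∧ x < y then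
        ENNReal.ofReal (p * q * Real.exp (-(p * x) - q * y)) else 0)
        = (Set.Ioi x).indicator (fun y =>
            ENNReal.ofReal (p * Real.exp (-(p * x))) * ENNReal.ofReal (q * Real.exp (-(q * y)))) := by
      funext y
      by_cases h : x < y
      · rw [Set.indicator_of_mem (Set.mem_Ioi.2 h), if_pos ⟨hx0, h⟩, ← ENNReal.ofReal_mul (by positivity)]
        congr 1
        rw [show -(p * x) - q * y = -(p * x) + -(q * y) by ring, Real.exp_add]
        ring
      · rw [Set.indicator_of_notMem (fun hc => h (Set.mem_Ioi.1 hc)), if_neg (fun hc => h hc.2)]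
    rw [hfun, lintegral_indicator measurableSet_Ioi, Measure.restrict_restrict measurableSet_Ioi,
      Set.Ioi_inter_Ioi, lintegral_const_mul _ (Measurable.ennreal_ofReal (by fun_prop)),
      L1 q q _ hq hq.le, div_self hq.ne', one_mul, max_comm x t,
      ← ENNReal.ofReal_mul (by positivity)]
  rw [setLIntegral_congr_fun measurableSet_Ioi hinner]
  exact keyH p q s t hp hq

lemma sum_identity (a1 a2 a3 s t : ℝ) (ha1 : 0 < a1) (ha2 : 0 < a2) (ha3 : 0 < a3) :
    ENNReal.ofReal (a3 / (a1 + a2 + a3) * Real.exp (-((a1 + a2 + a3) * max s t)))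
      + (ENNReal.ofReal ((Real.exp (-(a1 * s)) - Real.exp (-(a1 * max s t)))
            * Real.exp (-((a2 + a3) * t)))
        + ENNReal.ofReal (a1 / (a1 + (a2 + a3)) * Real.exp (-((a1 + (a2 + a3)) * max s t))))
      + (ENNReal.ofReal ((Real.exp (-(a2 * t)) - Real.exp (-(a2 * max t s)))
            * Real.exp (-((a1 + a3) * s)))
        + ENNReal.ofReal (a2 / (a2 + (a1 + a3)) * Real.exp (-((a2 + (a1 + a3)) * max t s))))
      = ENNReal.ofReal (Real.exp (-(a1 * s) - a2 * t - a3 * max s t)) := by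
  have hm : 0 < a1 + a2 + a3 := by linarith
  have hd1 : 0 ≤ Real.exp (-(a1 * s)) - Real.exp (-(a1 * max s t)) :=
    sub_nonneg.2 (Real.exp_le_exp.2 (neg_le_neg
      (mul_le_mul_of_nonneg_left (le_max_left s t) ha1.le)))
  have hd2 : 0 ≤ Real.exp (-(a2 * t)) - Real.exp (-(a2 * max t s)) :=
    sub_nonneg.2 (Real.exp_le_exp.2 (neg_le_neg
      (mul_le_mul_of_nonneg_left (le_max_left t s) ha2.le)))
  rw [← ENNReal.ofReal_add (by positivity) (by positivity),
    ← ENNReal.ofReal_add (by positivity) (by positivity),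
    ← ENNReal.ofReal_add (by positivity) (by positivity),
    ← ENNReal.ofReal_add (by positivity) (by positivity)]
  congr 1
  have e3 : a1 + (a2 + a3) = a1 + a2 + a3 := by ring
  have e4 : a2 + (a1 + a3) = a1 + a2 + a3 := by ring
  rw [e3, e4]
  rcases le_total s t with h | h
  · rw [max_eq_right h, max_eq_left h]
    have e1 : Real.exp (-(a1 * s)) * Real.exp (-((a2 + a3) * t))
        = Real.exp (-(a1 * s) - a2 * t - a3 * t) := by rw [← Real.exp_add]; ring_nf
    have e2 : Real.exp (-(a1 * t)) * Real.exp (-((a2 + a3) * t))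
        = Real.exp (-((a1 + a2 + a3) * t)) := by rw [← Real.exp_add]; ring_nf
    rw [sub_mul, e1, e2, sub_self, zero_mul]
    field_simp
    ring
  · rw [max_eq_left h, max_eq_right h]
    have e1 : Real.exp (-(a2 * t)) * Real.exp (-((a1 + a3) * s))
        = Real.exp (-(a1 * s) - a2 * t - a3 * s) := by rw [← Real.exp_add]; ring_nf
    have e2 : Real.exp (-(a2 * s)) * Real.exp (-((a1 + a3) * s))
        = Real.exp (-((a1 + a2 + a3) * s)) := by rw [← Real.exp_add]; ring_nf
    rw [sub_self, zero_mul, sub_mul, e1, e2]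
    field_simp
    ring

lemma lintegral_restrict_support {α : Type*} [MeasurableSpace α] {ν : Measure α}
    {f : α → ℝ≥0∞} {P : Set α} (hP : MeasurableSet P) (hsupp : ∀ z, f z ≠ 0 → z ∈ P)
    (A : Set α) : ∫⁻ z in A, f z ∂ν = ∫⁻ z in P ∩ A, f z ∂ν := by
  have hfi : f = P.indicator f := by
    funext z
    by_cases h : z ∈ P
    · rw [Set.indicator_of_mem h]
    · rw [Set.indicator_of_notMem h]
      by_contra hne
      exact h (hsupp z hne)
  conv_lhs => rw [hfi]
  rw [lintegral_indicator hP, Measure.restrict_restrict hP]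

noncomputable def bveF (a1 a2 a3 : ℝ) : ℝ × ℝ → ℝ≥0∞ := fun z =>
  (if 0 < z.1 ∧ z.1 < z.2 then
      ENNReal.ofReal (a1 * (a2 + a3) * Real.exp (-(a1 * z.1) - (a2 + a3) * z.2)) else 0)
  + (if 0 < z.2 ∧ z.2 < z.1 then
      ENNReal.ofReal (a2 * (a1 + a3) * Real.exp (-(a2 * z.2) - (a1 + a3) * z.1)) else 0)

lemma bveF_measurable (a1 a2 a3 : ℝ) : Measurable (bveF a1 a2 a3) := by
  apply Measurable.add
  · refine Measurable.ite ?_ (by fun_prop) measurable_const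
    exact (measurableSet_lt measurable_const measurable_fst).inter
      (measurableSet_lt measurable_fst measurable_snd)
  · refine Measurable.ite ?_ (by fun_prop) measurable_const
    exact (measurableSet_lt measurable_const measurable_snd).inter
      (measurableSet_lt measurable_snd measurable_fst)

lemma bveF_support (a1 a2 a3 : ℝ) :
    ∀ z, bveF a1 a2 a3 z ≠ 0 → z ∈ Set.Ioi (0:ℝ) ×ˢ Set.Ioi (0:ℝ) := by
  intro z hz
  by_contra h
  apply hz
  rw [bveF, if_neg, if_neg, add_zero]
  · exact fun ⟨h1, h2⟩ => h (Set.mem_prod.2 ⟨Set.mem_Ioi.2 (h1.trans h2), Set.mem_Ioi.2 h1⟩)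
  · exact fun ⟨h1, h2⟩ => h (Set.mem_prod.2 ⟨Set.mem_Ioi.2 h1, Set.mem_Ioi.2 (h1.trans h2)⟩)

noncomputable def bveXi (a1 a2 a3 : ℝ) : Measure (ℝ × ℝ) :=
  Measure.map (fun x : ℝ => (x, x))
    ((volume : Measure ℝ).withDensity
      (Set.indicator (Set.Ioi 0) (fun x => ENNReal.ofReal (a3 * Real.exp (-((a1 + a2 + a3) * x))))))

lemma xi_apply (a1 a2 a3 : ℝ) {T : Set (ℝ × ℝ)} (hT : MeasurableSet T) :
    bveXi a1 a2 a3 T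
      = ∫⁻ x in Set.Ioi 0 ∩ ((fun x : ℝ => (x, x)) ⁻¹' T),
          ENNReal.ofReal (a3 * Real.exp (-((a1 + a2 + a3) * x))) := by
  have hdiag : Measurable (fun x : ℝ => (x, x)) := measurable_id.prodMk measurable_id
  rw [bveXi, Measure.map_apply hdiag hT, withDensity_apply _ (hdiag hT),
    lintegral_indicator measurableSet_Ioi, Measure.restrict_restrict measurableSet_Ioi]

lemma xi_rect (a1 a2 a3 : ℝ) (ha1 : 0 < a1) (ha2 : 0 < a2) (ha3 : 0 < a3) (a b : ℝ) :
    bveXi a1 a2 a3 (Set.Ioi a ×ˢ Set.Ioi b)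
      = ENNReal.ofReal (a3 / (a1 + a2 + a3)
          * Real.exp (-((a1 + a2 + a3) * ((a ⊔ 0) ⊔ (b ⊔ 0))))) := by
  rw [xi_apply _ _ _ (measurableSet_Ioi.prod measurableSet_Ioi)]
  have hpre : (fun x : ℝ => (x, x)) ⁻¹' (Set.Ioi a ×ˢ Set.Ioi b) = Set.Ioi (a ⊔ b) := by
    ext x
    simp [Set.mem_prod, max_lt_iff]
  rw [hpre, Set.Ioi_inter_Ioi,
    show (0 ⊔ (a ⊔ b)) = ((a ⊔ 0) ⊔ (b ⊔ 0)) by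
      rw [max_max_max_comm a 0 b 0, max_self, max_comm],
    L1 (a1 + a2 + a3) a3 _ (by linarith) ha3.le]

lemma bve_rect (a1 a2 a3 : ℝ) (ha1 : 0 < a1) (ha2 : 0 < a2) (ha3 : 0 < a3) (a b : ℝ) :
    (bveXi a1 a2 a3 + (volume : Measure (ℝ × ℝ)).withDensity (bveF a1 a2 a3))
        (Set.Ioi a ×ˢ Set.Ioi b)
      = ENNReal.ofReal (Real.exp (-(a1 * (a ⊔ 0)) - a2 * (b ⊔ 0)
          - a3 * ((a ⊔ 0) ⊔ (b ⊔ 0)))) := by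
  have hrectmeas : MeasurableSet (Set.Ioi a ×ˢ Set.Ioi b : Set (ℝ × ℝ)) :=
    measurableSet_Ioi.prod measurableSet_Ioi
  rw [Measure.add_apply, xi_rect a1 a2 a3 ha1 ha2 ha3 a b,
    withDensity_apply _ hrectmeas,
    lintegral_restrict_support (measurableSet_Ioi.prod measurableSet_Ioi)
      (bveF_support a1 a2 a3)]
  have hinter : Set.Ioi (0:ℝ) ×ˢ Set.Ioi (0:ℝ) ∩ Set.Ioi a ×ˢ Set.Ioi b
      = Set.Ioi (a ⊔ 0) ×ˢ Set.Ioi (b ⊔ 0) := by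
    rw [Set.prod_inter_prod, Set.Ioi_inter_Ioi, Set.Ioi_inter_Ioi, max_comm 0 a, max_comm 0 b]
  rw [hinter, Measure.volume_eq_prod]
  have hF1 : Measurable (fun z : ℝ × ℝ => if 0 < z.1 ∧ z.1 < z.2 then
      ENNReal.ofReal (a1 * (a2 + a3) * Real.exp (-(a1 * z.1) - (a2 + a3) * z.2)) else 0) := by
    refine Measurable.ite ?_ (by fun_prop) measurable_const
    exact (measurableSet_lt measurable_const measurable_fst).inter
      (measurableSet_lt measurable_fst measurable_snd)
  rw [show bveF a1 a2 a3 = fun z =>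
      (if 0 < z.1 ∧ z.1 < z.2 then
        ENNReal.ofReal (a1 * (a2 + a3) * Real.exp (-(a1 * z.1) - (a2 + a3) * z.2)) else 0)
      + (if 0 < z.2 ∧ z.2 < z.1 then
        ENNReal.ofReal (a2 * (a1 + a3) * Real.exp (-(a2 * z.2) - (a1 + a3) * z.1)) else 0)
    from rfl]
  rw [lintegral_add_left hF1]
  have h1 := rect_region a1 (a2 + a3) (a ⊔ 0) (b ⊔ 0) ha1 (by linarith) (le_max_right a 0)
  have h2 : ∫⁻ z in Set.Ioi (a ⊔ 0) ×ˢ Set.Ioi (b ⊔ 0),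
      (if 0 < z.2 ∧ z.2 < z.1 then
        ENNReal.ofReal (a2 * (a1 + a3) * Real.exp (-(a2 * z.2) - (a1 + a3) * z.1)) else 0)
      ∂((volume : Measure ℝ).prod (volume : Measure ℝ))
      = ENNReal.ofReal ((Real.exp (-(a2 * (b ⊔ 0)))
            - Real.exp (-(a2 * ((b ⊔ 0) ⊔ (a ⊔ 0))))) * Real.exp (-((a1 + a3) * (a ⊔ 0))))
        + ENNReal.ofReal (a2 / (a2 + (a1 + a3))
            * Real.exp (-((a2 + (a1 + a3)) * ((b ⊔ 0) ⊔ (a ⊔ 0))))) := by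
    have hswap := lintegral_prod_swap
      (μ := (volume : Measure ℝ).restrict (Set.Ioi (b ⊔ 0)))
      (ν := (volume : Measure ℝ).restrict (Set.Ioi (a ⊔ 0)))
      (fun w : ℝ × ℝ => if 0 < w.1 ∧ w.1 < w.2 then
        ENNReal.ofReal (a2 * (a1 + a3) * Real.exp (-(a2 * w.1) - (a1 + a3) * w.2)) else 0)
    rw [← Measure.prod_restrict]
    exact hswap.trans (by
      rw [Measure.prod_restrict]
      exact rect_region a2 (a1 + a3) (b ⊔ 0) (a ⊔ 0) ha2 (by linarith) (le_max_right b 0))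
  rw [h1, h2, ← add_assoc]
  exact sum_identity a1 a2 a3 (a ⊔ 0) (b ⊔ 0) ha1 ha2 ha3


end BVEAux

/-- The Marshall–Olkin BVE has no density with respect to Lebesgue measure on `ℝ²`:
its law is not absolutely continuous, the singular part (w.r.t. Lebesgue measure) has total
mass `α³/(α¹+α²+α³)` and is carried by the diagonal `{(x,x) : x ≥ 0}`. -/
theorem bve_no_density {Ω : Type*} [MeasurableSpace Ω] (μ : Measure Ω) [IsProbabilityMeasure μ]
    (Z1 Z2 : Ω → ℝ) (hZ1 : Measurable Z1) (hZ2 : Measurable Z2)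
    (hpos1 : ∀ᵐ ω ∂μ, 0 ≤ Z1 ω) (hpos2 : ∀ᵐ ω ∂μ, 0 ≤ Z2 ω)
    (a1 a2 a3 : ℝ) (ha1 : 0 < a1) (ha2 : 0 < a2) (ha3 : 0 < a3)
    (hsurv : ∀ s t : ℝ, 0 ≤ s → 0 ≤ t →
      μ {ω | s < Z1 ω ∧ t < Z2 ω} =
        ENNReal.ofReal (Real.exp (-(a1 * s) - a2 * t - a3 * max s t))) :
    ¬ (Measure.map (fun ω => (Z1 ω, Z2 ω)) μ) ≪ (volume : Measure (ℝ × ℝ)) ∧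
    (Measure.map (fun ω => (Z1 ω, Z2 ω)) μ).singularPart (volume : Measure (ℝ × ℝ)) Set.univ
      = ENNReal.ofReal (a3 / (a1 + a2 + a3)) ∧
    (Measure.map (fun ω => (Z1 ω, Z2 ω)) μ).singularPart (volume : Measure (ℝ × ℝ))
      {p : ℝ × ℝ | p.1 = p.2 ∧ 0 ≤ p.1}ᶜ = 0 := by
  have hm : (0:ℝ) < a1 + a2 + a3 := by linarith
  have hpair : Measurable (fun ω => (Z1 ω, Z2 ω)) := hZ1.prodMk hZ2
  set ν := Measure.map (fun ω => (Z1 ω, Z2 ω)) μ with hν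
  have : IsProbabilityMeasure ν := Measure.isProbabilityMeasure_map hpair.aemeasurable
  -- a.e. positivity
  have hSmeas : MeasurableSet {ω | 0 < Z1 ω ∧ 0 < Z2 ω} :=
    (measurableSet_lt measurable_const hZ1).inter (measurableSet_lt measurable_const hZ2)
  have hP : μ {ω | 0 < Z1 ω ∧ 0 < Z2 ω} = 1 := by
    have := hsurv 0 0 le_rfl le_rfl
    simpa using this
  have haeP : ∀ᵐ ω ∂μ, 0 < Z1 ω ∧ 0 < Z2 ω := by
    rw [ae_iff]
    have := measure_compl hSmeas (measure_ne_top μ _)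
    simp only [hP, measure_univ] at this
    simpa [Set.compl_setOf] using this
  -- survival values of ν on rectangles
  have hq : ∀ a b : ℝ, ν (Set.Ioi a ×ˢ Set.Ioi b)
      = ENNReal.ofReal (Real.exp (-(a1 * (a ⊔ 0)) - a2 * (b ⊔ 0)
          - a3 * ((a ⊔ 0) ⊔ (b ⊔ 0)))) := by
    intro a b
    rw [hν, Measure.map_apply hpair (measurableSet_Ioi.prod measurableSet_Ioi)]
    have hpre : (fun ω => (Z1 ω, Z2 ω)) ⁻¹' (Set.Ioi a ×ˢ Set.Ioi b)
        = {ω | a < Z1 ω ∧ b < Z2 ω} := rfl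
    rw [hpre]
    have hEq : {ω | a < Z1 ω ∧ b < Z2 ω} =ᵐ[μ] {ω | (a ⊔ 0) < Z1 ω ∧ (b ⊔ 0) < Z2 ω} := by
      rw [Filter.eventuallyEq_set]
      filter_upwards [haeP] with ω hω
      constructor
      · exact fun ⟨x, y⟩ => ⟨sup_lt_iff.2 ⟨x, hω.1⟩, sup_lt_iff.2 ⟨y, hω.2⟩⟩
      · exact fun ⟨x, y⟩ => ⟨le_sup_left.trans_lt x, le_sup_left.trans_lt y⟩
    rw [measure_congr hEq, hsurv (a ⊔ 0) (b ⊔ 0) (le_max_right _ _) (le_max_right _ _)]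
  -- decomposition
  have hspan : IsCountablySpanning (Set.range (Set.Ioi : ℝ → Set ℝ)) := by
    refine ⟨fun n => Set.Ioi (-(n:ℝ)), fun n => ⟨-(n:ℝ), rfl⟩, ?_⟩
    ext x
    simp only [Set.mem_iUnion, Set.mem_Ioi, Set.mem_univ, iff_true]
    obtain ⟨n, hn⟩ := exists_nat_gt (-x)
    exact ⟨n, by linarith⟩
  have h1 : (inferInstance : MeasurableSpace ℝ)
      = MeasurableSpace.generateFrom (Set.range Set.Ioi) := by
    rw [BorelSpace.measurable_eq (α := ℝ), borel_eq_generateFrom_Ioi]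
  have hgen : (inferInstance : MeasurableSpace (ℝ × ℝ))
      = MeasurableSpace.generateFrom
          (Set.image2 (· ×ˢ ·) (Set.range Set.Ioi) (Set.range Set.Ioi)) := by
    rw [← generateFrom_prod_eq hspan hspan, ← h1]
  have hdecomp : ν = bveXi a1 a2 a3 + (volume : Measure (ℝ × ℝ)).withDensity (bveF a1 a2 a3) := by
    refine ext_of_generate_finite _ hgen (isPiSystem_Ioi.prod isPiSystem_Ioi) ?_ ?_
    · rintro _ ⟨_, ⟨a, rfl⟩, _, ⟨b, rfl⟩, rfl⟩
      rw [hq a b, bve_rect a1 a2 a3 ha1 ha2 ha3 a b]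
    · rw [measure_univ]
      have hmono : Monotone (fun n : ℕ => Set.Ioi (-(n:ℝ)) ×ˢ Set.Ioi (-(n:ℝ))) := by
        intro i j hij
        exact Set.prod_mono (Set.Ioi_subset_Ioi (by exact_mod_cast neg_le_neg (Nat.cast_le.2 hij)))
          (Set.Ioi_subset_Ioi (by exact_mod_cast neg_le_neg (Nat.cast_le.2 hij)))
      have hU : (⋃ n : ℕ, Set.Ioi (-(n:ℝ)) ×ˢ Set.Ioi (-(n:ℝ))) = Set.univ := by
        ext z
        simp only [Set.mem_iUnion, Set.mem_prod, Set.mem_Ioi, Set.mem_univ, iff_true]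
        obtain ⟨n, hn⟩ := exists_nat_gt (max (-z.1) (-z.2))
        exact ⟨n, by have := max_lt_iff.1 hn; constructor <;> linarith [this.1, this.2]⟩
      rw [← hU, Monotone.measure_iUnion hmono]
      have hval : ∀ n : ℕ, (bveXi a1 a2 a3
            + (volume : Measure (ℝ × ℝ)).withDensity (bveF a1 a2 a3))
            (Set.Ioi (-(n:ℝ)) ×ˢ Set.Ioi (-(n:ℝ))) = 1 := by
        intro n
        rw [bve_rect a1 a2 a3 ha1 ha2 ha3,
          max_eq_right (neg_nonpos.2 (Nat.cast_nonneg n))]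
        simp
      simp [hval]
  -- singularity of the diagonal part
  have hD0meas : MeasurableSet {p : ℝ × ℝ | p.1 = p.2} :=
    measurableSet_eq_fun measurable_fst measurable_snd
  have hvolD0 : (volume : Measure (ℝ × ℝ)) {p : ℝ × ℝ | p.1 = p.2} = 0 := by
    rw [Measure.volume_eq_prod, Measure.prod_apply hD0meas]
    have hfib : ∀ x : ℝ, (Prod.mk x ⁻¹' {p : ℝ × ℝ | p.1 = p.2}) = {x} := by
      intro x; ext y; simp [eq_comm]
    simp [hfib]
  have hsing : bveXi a1 a2 a3 ⟂ₘ (volume : Measure (ℝ × ℝ)) := by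
    refine ⟨{p : ℝ × ℝ | p.1 = p.2}ᶜ, hD0meas.compl, ?_, ?_⟩
    · rw [xi_apply a1 a2 a3 hD0meas.compl]
      have : ((fun x : ℝ => (x, x)) ⁻¹' {p : ℝ × ℝ | p.1 = p.2}ᶜ) = ∅ := by
        ext x; simp
      rw [this, Set.inter_empty, Measure.restrict_empty, lintegral_zero_measure]
    · rw [compl_compl]; exact hvolD0
  have hsp : bveXi a1 a2 a3 = ν.singularPart (volume : Measure (ℝ × ℝ)) :=
    Measure.eq_singularPart (bveF_measurable a1 a2 a3) hsing hdecomp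
  have hxiuniv : bveXi a1 a2 a3 Set.univ = ENNReal.ofReal (a3 / (a1 + a2 + a3)) := by
    rw [xi_apply a1 a2 a3 MeasurableSet.univ, Set.preimage_univ, Set.inter_univ,
      show Set.Ioi (0:ℝ) = Set.Ioi (0:ℝ) from rfl, L1 (a1 + a2 + a3) a3 0 hm ha3.le]
    norm_num
  refine ⟨?_, ?_, ?_⟩
  · intro hac
    have h0 : ν {p : ℝ × ℝ | p.1 = p.2} = 0 := hac hvolD0
    rw [hdecomp, Measure.add_apply] at h0
    have hxiD0 : bveXi a1 a2 a3 {p : ℝ × ℝ | p.1 = p.2} = ENNReal.ofReal (a3 / (a1 + a2 + a3)) := by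
      rw [xi_apply a1 a2 a3 hD0meas,
        show ((fun x : ℝ => (x, x)) ⁻¹' {p : ℝ × ℝ | p.1 = p.2}) = Set.univ from by ext x; simp,
        Set.inter_univ, L1 (a1 + a2 + a3) a3 0 hm ha3.le]
      norm_num
    have := (add_eq_zero.1 h0).1
    rw [hxiD0] at this
    exact absurd this (by
      simp only [ne_eq, ENNReal.ofReal_eq_zero, not_le]
      positivity)
  · rw [← hsp]; exact hxiuniv
  · have hDmeas : MeasurableSet {p : ℝ × ℝ | p.1 = p.2 ∧ 0 ≤ p.1} := by
      rw [Set.setOf_and]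
      exact hD0meas.inter (measurableSet_le measurable_const measurable_fst)
    rw [← hsp, xi_apply a1 a2 a3 hDmeas.compl]
    have hpre : ((fun x : ℝ => (x, x)) ⁻¹' {p : ℝ × ℝ | p.1 = p.2 ∧ 0 ≤ p.1}ᶜ) = Set.Iio 0 := by
      ext x
      simp [not_le]
    rw [hpre, Set.Ioi_inter_Iio]
    simp
end

section
/- Key lemma of progressive enlargement: if 𝒢_t = ℱ_t ∨ σ(τ∧t), then for any 𝒢_t-measurable random variable Y there exists an ℱ_t-measurable random variable Z such that 1_{τ>t}·Y = 1_{τ>t}·Z almost surely. -/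
open MeasureTheory Real Set

/-- Key lemma of progressive enlargement: if `𝒢_t = ℱ_t ∨ σ(τ ∧ t)`, then every
`𝒢_t`-measurable random variable `Y` agrees, on `{τ > t}`, with some `ℱ_t`-measurable
random variable `Z` (almost surely). -/
theorem progressive_enlargement_reduction {Ω : Type*} {m0 : MeasurableSpace Ω}
    (μ : Measure Ω) [IsProbabilityMeasure μ]
    (F : Filtration ℝ m0) (τ : Ω → ℝ) (hτ : Measurable τ)
    (G : ℝ → MeasurableSpace Ω)
    (hG : ∀ t, G t = F t ⊔ MeasurableSpace.comap (fun ω => min (τ ω) t) inferInstance)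
    (t : ℝ) (Y : Ω → ℝ) (hY : Measurable[G t] Y) :
    ∃ Z : Ω → ℝ, Measurable[F t] Z ∧
      ∀ᵐ ω ∂μ, Set.indicator {ω' | t < τ ω'} Y ω = Set.indicator {ω' | t < τ ω'} Z ω := by
  set T : Set Ω := {ω' | t < τ ω'} with hTdef
  -- Key set-level lemma: every `G t`-measurable set agrees with an `F t`-measurable set on `T`.
  have key : ∀ B : Set Ω, MeasurableSet[G t] B →
      ∃ A : Set Ω, MeasurableSet[F t] A ∧ B ∩ T = A ∩ T := by
    let m' : MeasurableSpace Ω :=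
      { MeasurableSet' := fun B => ∃ A, MeasurableSet[F t] A ∧ B ∩ T = A ∩ T
        measurableSet_empty := ⟨∅, @MeasurableSet.empty Ω (F t), rfl⟩
        measurableSet_compl := by
          rintro B ⟨A, hA, hBA⟩
          refine ⟨Aᶜ, hA.compl, ?_⟩
          ext ω
          have h := Set.ext_iff.mp hBA ω
          simp only [mem_inter_iff, mem_compl_iff] at h ⊢
          tauto
        measurableSet_iUnion := by
          intro f hf
          choose A hA hfA using hf
          refine ⟨⋃ i, A i, MeasurableSet.iUnion hA, ?_⟩
          rw [Set.iUnion_inter, Set.iUnion_inter]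
          exact Set.iUnion_congr hfA }
    have hle : G t ≤ m' := by
      rw [hG t]
      refine sup_le ?_ ?_
      · intro B hB
        exact ⟨B, hB, rfl⟩
      · rintro B ⟨s, hs, rfl⟩
        by_cases hts : t ∈ s
        · refine ⟨Set.univ, MeasurableSet.univ, ?_⟩
          ext ω
          by_cases hω : ω ∈ T
          · have hmin : min (τ ω) t = t := min_eq_right (le_of_lt hω)
            simp [Set.mem_preimage, hmin, hts, hω]
          · simp [hω]
        · refine ⟨∅, @MeasurableSet.empty Ω (F t), ?_⟩
          ext ω
          by_cases hω : ω ∈ T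
          · have hmin : min (τ ω) t = t := min_eq_right (le_of_lt hω)
            simp [Set.mem_preimage, hmin, hts, hω]
          · simp [hω]
    exact fun B hB => hle B hB
  -- Transfer `Y` to an `ℝ≥0∞`-valued function via a Borel embedding.
  set W : Ω → ENNReal := fun ω => ENNReal.ofReal (Real.arctan (Y ω) + 2) with hWdef
  have hW : Measurable[G t] W :=
    ENNReal.measurable_ofReal.comp ((Real.continuous_arctan.measurable.comp hY).add
      measurable_const)
  -- level sets
  have hBq : ∀ q : ℚ, MeasurableSet[G t] {ω | ENNReal.ofReal q ≤ W ω} :=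
    fun q => hW measurableSet_Ici
  choose A hA hAeq using fun q : ℚ => key _ (hBq q)
  set Z' : Ω → ENNReal :=
    fun ω => ⨆ q : ℚ, Set.indicator (A q) (fun _ => ENNReal.ofReal q) ω with hZ'def
  have hZ'meas : Measurable[F t] Z' :=
    Measurable.iSup fun q => Measurable.indicator measurable_const (hA q)
  have hZ'W : ∀ ω ∈ T, Z' ω = W ω := by
    intro ω hω
    have hmem : ∀ q : ℚ, ω ∈ A q ↔ ENNReal.ofReal q ≤ W ω := by
      intro q
      have h1 := Set.ext_iff.mp (hAeq q) ω
      simp only [mem_inter_iff, mem_setOf_eq] at h1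
      constructor
      · intro h; exact (h1.mpr ⟨h, hω⟩).1
      · intro h; exact (h1.mp ⟨h, hω⟩).1
    apply le_antisymm
    · refine iSup_le fun q => ?_
      by_cases hq : ω ∈ A q
      · rw [Set.indicator_of_mem hq]; exact (hmem q).mp hq
      · rw [Set.indicator_of_notMem hq]; exact zero_le
    · refine le_of_forall_lt fun c hc => ?_
      obtain ⟨q, hq0, hcq, hqW⟩ := ENNReal.lt_iff_exists_rat_btwn.mp hc
      have hqA : ω ∈ A q := (hmem q).mpr (le_of_lt (by simpa [ENNReal.ofReal] using hqW))
      calc c < ENNReal.ofReal q := by simpa [ENNReal.ofReal] using hcq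
        _ = Set.indicator (A q) (fun _ => ENNReal.ofReal (q : ℝ)) ω := by
          rw [Set.indicator_of_mem hqA]
        _ ≤ Z' ω := le_iSup (fun q : ℚ => Set.indicator (A q) (fun _ => ENNReal.ofReal q) ω) q
  -- Pull back to `ℝ`.
  have htan : Measurable Real.tan := by
    have : Real.tan = fun x => Real.sin x / Real.cos x := funext Real.tan_eq_sin_div_cos
    rw [this]
    exact Real.continuous_sin.measurable.div Real.continuous_cos.measurable
  refine ⟨fun ω => Real.tan ((Z' ω).toReal - 2), ?_, ?_⟩
  · exact htan.comp ((ENNReal.measurable_toReal.comp hZ'meas).sub measurable_const)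
  · refine Filter.Eventually.of_forall fun ω => ?_
    by_cases hω : ω ∈ T
    · rw [Set.indicator_of_mem hω, Set.indicator_of_mem hω]
      have h2 : (0:ℝ) ≤ Real.arctan (Y ω) + 2 := by
        have := Real.neg_pi_div_two_lt_arctan (Y ω)
        have hpi : Real.pi < 4 := by
          have := Real.pi_lt_d2
          linarith
        linarith
      rw [hZ'W ω hω, hWdef]
      simp only [ENNReal.toReal_ofReal h2]
      rw [show Real.arctan (Y ω) + 2 - 2 = Real.arctan (Y ω) by ring, Real.tan_arctan]
    · rw [Set.indicator_of_notMem hω, Set.indicator_of_notMem hω]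
end

section
/- Let τ be a 𝔾 stopping time, λ a nonnegative bounded 𝔾-adapted process such that M_t = 1_{t≥τ} − ∫₀^{t∧τ} λ_s ds is a 𝔾-martingale. Then the process L_t = 1_{τ>t}·exp(∫₀^t λ_s ds) is a 𝔾-martingale, and satisfies dL_t = −exp(∫₀^t λ_s ds) dM_t. -/
open MeasureTheory Real Set Filter Topology

lemma intervalIntegrable_of_bdd' {f : ℝ → ℝ} (hm : Measurable f) {a b C : ℝ}
    (hC : ∀ s ∈ Set.uIoc a b, |f s| ≤ C) : IntervalIntegrable f volume a b := by
  rw [intervalIntegrable_iff]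
  refine Integrable.mono' (g := fun _ => C) (integrableOn_const measure_Ioc_lt_top.ne) hm.aestronglyMeasurable.restrict ?_
  exact (ae_restrict_iff' measurableSet_uIoc).2 (ae_of_all _ fun s hs => by
    simpa using hC s hs)

lemma calcCore {f : ℝ → ℝ} (hm : Measurable f) {C : ℝ}
    (h0 : ∀ s, 0 ≤ f s) (hC : ∀ s, f s ≤ C) {t : ℝ} (ht : 0 ≤ t) :
    ∫ s in (0:ℝ)..t, f s * Real.exp (∫ u in (0:ℝ)..s, f u)
      = Real.exp (∫ u in (0:ℝ)..t, f u) - 1 := by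
  set F : ℝ → ℝ := fun s => ∫ u in (0:ℝ)..s, f u with hF
  have hCpos : 0 ≤ C := (h0 0).trans (hC 0)
  have habs : ∀ s, |f s| ≤ C := fun s => abs_le.2 ⟨by linarith [h0 s, (h0 s).trans (hC s)], hC s⟩
  have hfint : ∀ a b : ℝ, IntervalIntegrable f volume a b := fun a b =>
    intervalIntegrable_of_bdd' hm (fun s _ => habs s)
  have hadd : ∀ a b : ℝ, F a + (∫ s in a..b, f s) = F b := fun a b =>
    intervalIntegral.integral_add_adjacent_intervals (hfint 0 a) (hfint a b)
  have hmono : ∀ a b : ℝ, a ≤ b → F a ≤ F b := by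
    intro a b hab
    have h1 : 0 ≤ ∫ s in a..b, f s :=
      intervalIntegral.integral_nonneg hab (fun s _ => h0 s)
    linarith [hadd a b]
  have hlip : ∀ a b : ℝ, a ≤ b → F b - F a ≤ C * (b - a) := by
    intro a b hab
    have h1 : (∫ s in a..b, f s) ≤ ∫ s in a..b, C := by
      apply intervalIntegral.integral_mono_on hab (hfint a b) intervalIntegrable_const
      exact fun s _ => hC s
    rw [intervalIntegral.integral_const, smul_eq_mul] at h1
    have := hadd a b; nlinarith
  have hF0 : F 0 = 0 := intervalIntegral.integral_same
  have hFcont : Continuous F := by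
    have : LipschitzWith (Real.toNNReal C) F := by
      apply LipschitzWith.of_dist_le_mul
      intro a b
      rcases le_total a b with h | h
      · rw [Real.dist_eq, Real.dist_eq, abs_of_nonpos (by linarith [hmono a b h]),
          abs_of_nonpos (by linarith), Real.coe_toNNReal _ hCpos]
        have := hlip a b h; nlinarith
      · rw [Real.dist_eq, Real.dist_eq, abs_of_nonneg (by linarith [hmono b a h]),
          abs_of_nonneg (by linarith), Real.coe_toNNReal _ hCpos]
        have := hlip b a h; nlinarith
    exact this.continuous
  have hgm : Measurable fun s => f s * Real.exp (F s) :=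
    hm.mul (Real.continuous_exp.comp hFcont).measurable
  -- interval integrability of f * exp(F) on subintervals of [0,t]
  have hgint : ∀ a b : ℝ, 0 ≤ a → a ≤ b → b ≤ t → IntervalIntegrable (fun s => f s * Real.exp (F s)) volume a b := by
    intro a b ha hab hb
    apply intervalIntegrable_of_bdd' hgm (C := C * Real.exp (C * t))
    intro s hs
    rw [Set.uIoc_of_le hab] at hs
    have hFs : F s ≤ C * t := by
      have h1 : F s - F 0 ≤ C * (s - 0) := hlip 0 s (by linarith [hs.1])
      rw [hF0] at h1; nlinarith [hs.2]
    rw [abs_mul, abs_of_nonneg (Real.exp_pos _).le]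
    have := habs s
    have h2 : Real.exp (F s) ≤ Real.exp (C * t) := Real.exp_le_exp.2 hFs
    nlinarith [abs_nonneg (f s), Real.exp_pos (F s)]
  -- key per-interval estimate
  have step : ∀ a b : ℝ, 0 ≤ a → a ≤ b → b ≤ t →
      |(∫ s in a..b, f s * Real.exp (F s)) - (Real.exp (F b) - Real.exp (F a))|
        ≤ Real.exp (F b) * (F b - F a) ^ 2 := by
    intro a b ha hab hb
    have hD : 0 ≤ F b - F a := by linarith [hmono a b hab]
    have hDint : F a + (∫ s in a..b, f s) = F b := hadd a b
    have hIlb : Real.exp (F a) * (F b - F a) ≤ ∫ s in a..b, f s * Real.exp (F s) := by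
      have h1 : (∫ s in a..b, f s * Real.exp (F a)) ≤ ∫ s in a..b, f s * Real.exp (F s) := by
        apply intervalIntegral.integral_mono_on hab
          ((hfint a b).mul_const _) (hgint a b ha hab hb)
        intro s hs
        exact mul_le_mul_of_nonneg_left (Real.exp_le_exp.2 (hmono a s hs.1)) (h0 s)
      rwa [intervalIntegral.integral_mul_const, show (∫ s in a..b, f s) = F b - F a by linarith,
        mul_comm] at h1
    have hIub : (∫ s in a..b, f s * Real.exp (F s)) ≤ Real.exp (F b) * (F b - F a) := by
      have h1 : (∫ s in a..b, f s * Real.exp (F s)) ≤ ∫ s in a..b, f s * Real.exp (F b) := by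
        apply intervalIntegral.integral_mono_on hab (hgint a b ha hab hb)
          ((hfint a b).mul_const _)
        intro s hs
        exact mul_le_mul_of_nonneg_left (Real.exp_le_exp.2 (hmono s b hs.2)) (h0 s)
      rwa [intervalIntegral.integral_mul_const, show (∫ s in a..b, f s) = F b - F a by linarith,
        mul_comm] at h1
    have hexp : Real.exp (F a) * Real.exp (F b - F a) = Real.exp (F b) := by
      rw [← Real.exp_add]; ring_nf
    have h1 := Real.add_one_le_exp (F b - F a)
    have h1' := Real.add_one_le_exp (F a - F b)
    have hexp' : Real.exp (F b) * Real.exp (F a - F b) = Real.exp (F a) := by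
      rw [← Real.exp_add]; ring_nf
    have hElb : Real.exp (F a) * (F b - F a) ≤ Real.exp (F b) - Real.exp (F a) := by
      nlinarith [Real.exp_pos (F a)]
    have hEub : Real.exp (F b) - Real.exp (F a) ≤ Real.exp (F b) * (F b - F a) := by
      nlinarith [Real.exp_pos (F b)]
    rw [abs_sub_le_iff]
    constructor <;> nlinarith [Real.exp_pos (F a), Real.exp_pos (F b)]
  -- partition argument
  have key : ∀ n : ℕ, 0 < n →
      |(∫ s in (0:ℝ)..t, f s * Real.exp (F s)) - (Real.exp (F t) - 1)|
        ≤ Real.exp (C * t) * C ^ 2 * t ^ 2 / n := by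
    intro n hn
    set p : ℕ → ℝ := fun k => k * t / n with hp
    have hp0 : p 0 = 0 := by simp [hp]
    have hpn : p n = t := by
      have : (n:ℝ) ≠ 0 := by exact_mod_cast hn.ne'
      simp only [hp]; field_simp
    have hnn : (0:ℝ) < n := by exact_mod_cast hn
    have hpmono : ∀ l k : ℕ, l ≤ k → p l ≤ p k := by
      intro l k hl
      have hlk : (l:ℝ) ≤ k := by exact_mod_cast hl
      simp only [hp]
      gcongr
    have hpk_nonneg : ∀ k, 0 ≤ p k := fun k => hp0 ▸ hpmono 0 k (Nat.zero_le k)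
    have hpk_le_t : ∀ k, k ≤ n → p k ≤ t := fun k hk => hpn ▸ hpmono k n hk
    have hdiff : ∀ k : ℕ, p (k + 1) - p k = t / n := by
      intro k
      simp only [hp]
      push_cast
      field_simp
      ring
    have sum1 : ∑ k ∈ Finset.range n, ∫ s in p k..p (k+1), f s * Real.exp (F s)
        = ∫ s in (0:ℝ)..t, f s * Real.exp (F s) := by
      have h := intervalIntegral.sum_integral_adjacent_intervals (a := p) (n := n)
        (fun k hk => hgint (p k) (p (k+1)) (hpk_nonneg k)
          (hpmono k (k+1) (Nat.le_succ k)) (hpk_le_t (k+1) hk))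
      rwa [hp0, hpn] at h
    have sum2 : ∑ k ∈ Finset.range n, (Real.exp (F (p (k+1))) - Real.exp (F (p k)))
        = Real.exp (F t) - 1 := by
      rw [Finset.sum_range_sub (fun k => Real.exp (F (p k))), hp0, hpn, hF0, Real.exp_zero]
    have perterm : ∀ k, k < n →
        |(∫ s in p k..p (k+1), f s * Real.exp (F s))
            - (Real.exp (F (p (k+1))) - Real.exp (F (p k)))|
          ≤ Real.exp (C * t) * C ^ 2 * t ^ 2 / n ^ 2 := by
      intro k hk
      have hab : p k ≤ p (k+1) := hpmono k (k+1) (Nat.le_succ k)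
      have h1 := step (p k) (p (k+1)) (hpk_nonneg k) hab (hpk_le_t (k+1) hk)
      have hFub : F (p (k+1)) ≤ C * t := by
        have := hlip 0 (p (k+1)) (hpk_nonneg (k+1))
        rw [hF0] at this
        nlinarith [hpk_le_t (k+1) hk, hpk_nonneg (k+1)]
      have hDub : F (p (k+1)) - F (p k) ≤ C * (t / n) := by
        have := hlip (p k) (p (k+1)) hab
        rw [hdiff k] at this
        linarith
      have hD0 : 0 ≤ F (p (k+1)) - F (p k) := by linarith [hmono (p k) (p (k+1)) hab]
      have hexp : Real.exp (F (p (k+1))) ≤ Real.exp (C * t) := Real.exp_le_exp.2 hFub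
      have htn : 0 ≤ t / n := div_nonneg ht hnn.le
      calc |(∫ s in p k..p (k+1), f s * Real.exp (F s))
            - (Real.exp (F (p (k+1))) - Real.exp (F (p k)))|
          ≤ Real.exp (F (p (k+1))) * (F (p (k+1)) - F (p k)) ^ 2 := h1
        _ ≤ Real.exp (C * t) * (C * (t / n)) ^ 2 := by
            have hsq : (F (p (k+1)) - F (p k)) ^ 2 ≤ (C * (t / n)) ^ 2 := by nlinarith
            exact mul_le_mul hexp hsq (sq_nonneg _) (Real.exp_pos _).le
        _ = Real.exp (C * t) * C ^ 2 * t ^ 2 / n ^ 2 := by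
            field_simp
    calc |(∫ s in (0:ℝ)..t, f s * Real.exp (F s)) - (Real.exp (F t) - 1)|
        = |∑ k ∈ Finset.range n, ((∫ s in p k..p (k+1), f s * Real.exp (F s))
            - (Real.exp (F (p (k+1))) - Real.exp (F (p k))))| := by
          rw [Finset.sum_sub_distrib, sum1, sum2]
      _ ≤ ∑ k ∈ Finset.range n, |(∫ s in p k..p (k+1), f s * Real.exp (F s))
            - (Real.exp (F (p (k+1))) - Real.exp (F (p k)))| :=
          Finset.abs_sum_le_sum_abs _ _
      _ ≤ ∑ _k ∈ Finset.range n, Real.exp (C * t) * C ^ 2 * t ^ 2 / n ^ 2 :=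
          Finset.sum_le_sum (fun k hk => perterm k (Finset.mem_range.1 hk))
      _ = Real.exp (C * t) * C ^ 2 * t ^ 2 / n := by
          rw [Finset.sum_const, Finset.card_range, nsmul_eq_mul]
          field_simp
  -- conclude
  set K := Real.exp (C * t) * C ^ 2 * t ^ 2 with hK
  have hK0 : 0 ≤ K := by positivity
  by_contra hne
  set X := (∫ s in (0:ℝ)..t, f s * Real.exp (F s)) - (Real.exp (F t) - 1) with hXdef
  have hX : 0 < |X| := abs_pos.2 (sub_ne_zero.2 hne)
  obtain ⟨n, hn⟩ := exists_nat_gt (max (K / |X|) 0)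
  have hn0 : (0:ℝ) < n := lt_of_le_of_lt (le_max_right _ 0) hn
  have hnn : 0 < n := by exact_mod_cast hn0
  have h1 : K / |X| < n := lt_of_le_of_lt (le_max_left _ _) hn
  have h2 : K < n * |X| := by
    rw [div_lt_iff₀ hX] at h1
    linarith
  have h3 : K / n < |X| := by
    rw [div_lt_iff₀ hn0]
    linarith
  linarith [key n hnn]

lemma pathwise {f : ℝ → ℝ} (hm : Measurable f) {C : ℝ}
    (h0 : ∀ s, 0 ≤ f s) (hC : ∀ s, f s ≤ C) {t T : ℝ} (ht : 0 ≤ t) (hT : 0 ≤ T) :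
    (if t < T then (1:ℝ) else 0) * Real.exp (∫ s in (0:ℝ)..t, f s)
      = 1 + (∫ s in (0:ℝ)..t, Real.exp (∫ u in (0:ℝ)..s, f u) * f s
            * (if s ≤ T then (1:ℝ) else 0))
        - Real.exp (∫ u in (0:ℝ)..T, f u) * (if T ≤ t then (1:ℝ) else 0) := by
  set F : ℝ → ℝ := fun s => ∫ u in (0:ℝ)..s, f u with hF
  have hCpos : 0 ≤ C := (h0 0).trans (hC 0)
  have habs : ∀ s, |f s| ≤ C := fun s => abs_le.2 ⟨by linarith [h0 s, (h0 s).trans (hC s)], hC s⟩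
  have hfint : ∀ a b : ℝ, IntervalIntegrable f volume a b := fun a b =>
    intervalIntegrable_of_bdd' hm (fun s _ => habs s)
  have hadd : ∀ a b : ℝ, F a + (∫ s in a..b, f s) = F b := fun a b =>
    intervalIntegral.integral_add_adjacent_intervals (hfint 0 a) (hfint a b)
  have hmono : ∀ a b : ℝ, a ≤ b → F a ≤ F b := by
    intro a b hab
    have h1 : 0 ≤ ∫ s in a..b, f s :=
      intervalIntegral.integral_nonneg hab (fun s _ => h0 s)
    linarith [hadd a b]
  have hlip : ∀ a b : ℝ, a ≤ b → F b - F a ≤ C * (b - a) := by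
    intro a b hab
    have h1 : (∫ s in a..b, f s) ≤ ∫ s in a..b, C := by
      apply intervalIntegral.integral_mono_on hab (hfint a b) intervalIntegrable_const
      exact fun s _ => hC s
    rw [intervalIntegral.integral_const, smul_eq_mul] at h1
    have := hadd a b; nlinarith
  have hF0 : F 0 = 0 := intervalIntegral.integral_same
  have hFcont : Continuous F := by
    have : LipschitzWith (Real.toNNReal C) F := by
      apply LipschitzWith.of_dist_le_mul
      intro a b
      rcases le_total a b with h | h
      · rw [Real.dist_eq, Real.dist_eq, abs_of_nonpos (by linarith [hmono a b h]),
          abs_of_nonpos (by linarith), Real.coe_toNNReal _ hCpos]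
        have := hlip a b h; nlinarith
      · rw [Real.dist_eq, Real.dist_eq, abs_of_nonneg (by linarith [hmono b a h]),
          abs_of_nonneg (by linarith), Real.coe_toNNReal _ hCpos]
        have := hlip b a h; nlinarith
    exact this.continuous
  set g : ℝ → ℝ := fun s => Real.exp (F s) * f s * (if s ≤ T then (1:ℝ) else 0) with hg
  have hgm : Measurable g := by
    apply Measurable.mul
    · exact ((Real.continuous_exp.comp hFcont).measurable).mul hm
    · exact measurable_const.ite measurableSet_Iic measurable_const
  have hgint : ∀ a b : ℝ, 0 ≤ a → a ≤ b → IntervalIntegrable g volume a b := by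
    intro a b ha hab
    apply intervalIntegrable_of_bdd' hgm (C := Real.exp (C * b) * C)
    intro s hs
    rw [Set.uIoc_of_le hab] at hs
    have hFs : F s ≤ C * b := by
      have h1 := hlip 0 s (by linarith [hs.1])
      rw [hF0] at h1
      nlinarith [hs.2, hs.1.le]
    have h2 : Real.exp (F s) ≤ Real.exp (C * b) := Real.exp_le_exp.2 hFs
    rw [hg, abs_mul, abs_mul, abs_of_nonneg (Real.exp_pos _).le]
    have h3 : |if s ≤ T then (1:ℝ) else 0| ≤ 1 := by split <;> simp
    have h4 := habs s
    have h5 : Real.exp (F s) * |f s| * |if s ≤ T then (1:ℝ) else 0|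
        ≤ Real.exp (C * b) * C * 1 :=
      mul_le_mul (mul_le_mul h2 h4 (abs_nonneg _) (Real.exp_pos _).le) h3 (abs_nonneg _)
        (by positivity)
    linarith
  rcases le_or_gt T t with hTt | hTt
  · -- T ≤ t : both sides 0
    rw [if_neg (not_lt.2 hTt), if_pos hTt, zero_mul]
    have split : (∫ s in (0:ℝ)..t, g s) = (∫ s in (0:ℝ)..T, g s) + ∫ s in T..t, g s :=
      (intervalIntegral.integral_add_adjacent_intervals (hgint 0 T le_rfl hT)
        (hgint T t hT hTt)).symm
    have h1 : (∫ s in (0:ℝ)..T, g s) = Real.exp (F T) - 1 := by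
      rw [show (∫ s in (0:ℝ)..T, g s) = ∫ s in (0:ℝ)..T, f s * Real.exp (F s) from
        intervalIntegral.integral_congr (fun s hs => by
          rw [Set.uIcc_of_le hT] at hs
          simp only [hg, if_pos hs.2]
          ring)]
      exact calcCore hm h0 hC hT
    have h2 : (∫ s in T..t, g s) = 0 := by
      rw [show (∫ s in T..t, g s) = ∫ s in T..t, (0:ℝ) from
        intervalIntegral.integral_congr_ae (ae_of_all _ (fun s hs => by
          rw [Set.uIoc_of_le hTt] at hs
          simp only [hg, if_neg (not_le.2 hs.1)]
          ring)), intervalIntegral.integral_zero]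
    rw [split, h1, h2]
    ring
  · -- t < T
    rw [if_pos hTt, if_neg (not_le.2 hTt), one_mul, mul_zero]
    have h1 : (∫ s in (0:ℝ)..t, g s) = Real.exp (F t) - 1 := by
      rw [show (∫ s in (0:ℝ)..t, g s) = ∫ s in (0:ℝ)..t, f s * Real.exp (F s) from
        intervalIntegral.integral_congr (fun s hs => by
          rw [Set.uIcc_of_le ht] at hs
          simp only [hg, if_pos (hs.2.trans hTt.le)]
          ring)]
      exact calcCore hm h0 hC ht
    rw [h1]
    ring

lemma exp_sub_exp_le {a b B : ℝ} (ha : a ≤ B) (hb : b ≤ B) :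
    |Real.exp a - Real.exp b| ≤ Real.exp B * |a - b| := by
  wlog hab : b ≤ a generalizing a b
  · rw [abs_sub_comm, abs_sub_comm a b]; exact this hb ha (le_of_not_ge hab)
  have key : Real.exp b * Real.exp (a - b) = Real.exp a := by
    rw [← Real.exp_add]; ring_nf
  have h1 := Real.add_one_le_exp (b - a)
  have h2 : Real.exp (a - b) * Real.exp (b - a) = 1 := by
    rw [← Real.exp_add]; ring_nf; exact Real.exp_zero
  have h3 : Real.exp a ≤ Real.exp B := Real.exp_le_exp.2 ha
  rw [abs_of_nonneg (sub_nonneg.2 (Real.exp_le_exp.2 hab)), abs_of_nonneg (sub_nonneg.2 hab)]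
  nlinarith [Real.exp_pos a, Real.exp_pos b, Real.exp_pos (a - b), Real.exp_pos (b - a)]

set_option maxHeartbeats 1000000 in
lemma approx_bound {f F χ : ℝ → ℝ} {p : ℕ → ℝ} (hm : Measurable f) {C : ℝ}
    (h0 : ∀ s, 0 ≤ f s) (hC : ∀ s, f s ≤ C) {T i j : ℝ}
    (hT : 0 ≤ T) (hi : 0 ≤ i) (hij : i ≤ j) {N : ℕ} (hN : 0 < N)
    (hFdef : ∀ s, F s = ∫ u in (0:ℝ)..s, f u)
    (hχdef : ∀ t, χ t = if T ≤ t then (1:ℝ) else 0)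
    (hpdef : ∀ k : ℕ, p k = i + (k:ℝ) * (j - i) / N) :
    |(∑ k ∈ Finset.range N, Real.exp (F (p k))
        * ((χ (p (k+1)) - F (min (p (k+1)) T)) - (χ (p k) - F (min (p k) T))))
      + (((if j < T then (1:ℝ) else 0) * Real.exp (F j))
        - ((if i < T then (1:ℝ) else 0) * Real.exp (F i)))|
      ≤ Real.exp (C * j) * (C * (j - i) + C ^ 2 * (j - i) ^ 2) / N := by
  have hj : 0 ≤ j := hi.trans hij
  have hCpos : 0 ≤ C := (h0 0).trans (hC 0)
  have habs : ∀ s, |f s| ≤ C := fun s => abs_le.2 ⟨by linarith [h0 s, (h0 s).trans (hC s)], hC s⟩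
  have hfint : ∀ a b : ℝ, IntervalIntegrable f volume a b := fun a b =>
    intervalIntegrable_of_bdd' hm (fun s _ => habs s)
  have hadd : ∀ a b : ℝ, F a + (∫ s in a..b, f s) = F b := by
    intro a b
    rw [hFdef, hFdef]
    exact intervalIntegral.integral_add_adjacent_intervals (hfint 0 a) (hfint a b)
  have hmono : ∀ a b : ℝ, a ≤ b → F a ≤ F b := by
    intro a b hab
    have h1 : 0 ≤ ∫ s in a..b, f s :=
      intervalIntegral.integral_nonneg hab (fun s _ => h0 s)
    linarith [hadd a b]
  have hlip : ∀ a b : ℝ, a ≤ b → F b - F a ≤ C * (b - a) := by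
    intro a b hab
    have h1 : (∫ s in a..b, f s) ≤ ∫ s in a..b, C := by
      apply intervalIntegral.integral_mono_on hab (hfint a b) intervalIntegrable_const
      exact fun s _ => hC s
    rw [intervalIntegral.integral_const, smul_eq_mul] at h1
    have := hadd a b; nlinarith
  have hF0 : F 0 = 0 := by rw [hFdef]; exact intervalIntegral.integral_same
  have hFub : ∀ s, 0 ≤ s → s ≤ j → F s ≤ C * j := by
    intro s hs hsj
    have := hlip 0 s hs
    rw [hF0] at this
    nlinarith
  have hFcont : Continuous F := by
    have : LipschitzWith (Real.toNNReal C) F := by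
      apply LipschitzWith.of_dist_le_mul
      intro a b
      rcases le_total a b with h | h
      · rw [Real.dist_eq, Real.dist_eq, abs_of_nonpos (by linarith [hmono a b h]),
          abs_of_nonpos (by linarith), Real.coe_toNNReal _ hCpos]
        have := hlip a b h; nlinarith
      · rw [Real.dist_eq, Real.dist_eq, abs_of_nonneg (by linarith [hmono b a h]),
          abs_of_nonneg (by linarith), Real.coe_toNNReal _ hCpos]
        have := hlip b a h; nlinarith
    exact this.continuous
  set g : ℝ → ℝ := fun s => Real.exp (F s) * f s * (if s ≤ T then (1:ℝ) else 0) with hg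
  have hgm : Measurable g := by
    apply Measurable.mul
    · exact ((Real.continuous_exp.comp hFcont).measurable).mul hm
    · exact measurable_const.ite measurableSet_Iic measurable_const
  have hgint : ∀ a b : ℝ, 0 ≤ a → a ≤ b → IntervalIntegrable g volume a b := by
    intro a b ha hab
    apply intervalIntegrable_of_bdd' hgm (C := Real.exp (C * b) * C)
    intro s hs
    rw [Set.uIoc_of_le hab] at hs
    have hFs : F s ≤ C * b := by
      have h1 := hlip 0 s (by linarith [hs.1])
      rw [hF0] at h1
      nlinarith [hs.2, hs.1.le]
    have h2 : Real.exp (F s) ≤ Real.exp (C * b) := Real.exp_le_exp.2 hFs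
    rw [hg, abs_mul, abs_mul, abs_of_nonneg (Real.exp_pos _).le]
    have h3 : |if s ≤ T then (1:ℝ) else 0| ≤ 1 := by split <;> simp
    have h4 := habs s
    have h5 : Real.exp (F s) * |f s| * |if s ≤ T then (1:ℝ) else 0|
        ≤ Real.exp (C * b) * C * 1 :=
      mul_le_mul (mul_le_mul h2 h4 (abs_nonneg _) (Real.exp_pos _).le) h3 (abs_nonneg _)
        (by positivity)
    linarith
  have hNR : (0:ℝ) < N := by exact_mod_cast hN
  set δ : ℝ := (j - i) / N with hδdef
  have hδ : 0 ≤ δ := div_nonneg (by linarith) hNR.le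
  -- partition facts
  have hpmono : ∀ l k : ℕ, l ≤ k → p l ≤ p k := by
    intro l k hl
    rw [hpdef, hpdef]
    have hlk : (l:ℝ) ≤ k := by exact_mod_cast hl
    gcongr
  have hp0 : p 0 = i := by rw [hpdef]; simp
  have hpN : p N = j := by rw [hpdef]; field_simp; ring
  have hpi : ∀ k, i ≤ p k := fun k => hp0 ▸ hpmono 0 k (Nat.zero_le k)
  have hpnn : ∀ k, 0 ≤ p k := fun k => hi.trans (hpi k)
  have hpj : ∀ k, k ≤ N → p k ≤ j := fun k hk => hpN ▸ hpmono k N hk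
  have hpd : ∀ k : ℕ, p (k+1) - p k = δ := by
    intro k
    rw [hpdef, hpdef, hδdef]
    push_cast
    field_simp
    ring
  -- pathwise identities
  have pj := pathwise hm h0 hC hj hT
  have pi' := pathwise hm h0 hC hi hT
  simp only [← hFdef] at pj pi'
  have hsplit : (∫ s in (0:ℝ)..i, g s) + (∫ s in i..j, g s) = ∫ s in (0:ℝ)..j, g s :=
    intervalIntegral.integral_add_adjacent_intervals (hgint 0 i le_rfl hi) (hgint i j hi hij)
  have idA : ((if j < T then (1:ℝ) else 0) * Real.exp (F j))
      - ((if i < T then (1:ℝ) else 0) * Real.exp (F i))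
      = (∫ s in i..j, g s) - Real.exp (F T) * (χ j - χ i) := by
    rw [hχdef, hχdef]
    rw [pj, pi']
    simp only [hg]
    linarith [hsplit]
  -- rewrite the sum
  have hrw : (∑ k ∈ Finset.range N, Real.exp (F (p k))
        * ((χ (p (k+1)) - F (min (p (k+1)) T)) - (χ (p k) - F (min (p k) T))))
      = (∑ k ∈ Finset.range N, Real.exp (F (p k)) * (χ (p (k+1)) - χ (p k)))
        - ∑ k ∈ Finset.range N, Real.exp (F (p k))
            * (F (min (p (k+1)) T) - F (min (p k) T)) := by
    rw [← Finset.sum_sub_distrib]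
    exact Finset.sum_congr rfl fun k _ => by ring
  -- Bound 1 : jump part
  have hχmono : ∀ a b : ℝ, a ≤ b → χ a ≤ χ b := by
    intro a b hab
    rw [hχdef, hχdef]
    by_cases h1 : T ≤ a
    · rw [if_pos h1, if_pos (h1.trans hab)]
    · rw [if_neg h1]
      split <;> norm_num
  have hχ01 : ∀ a : ℝ, χ a = 0 ∨ χ a = 1 := by
    intro a
    rw [hχdef]
    split <;> simp
  have htel : ∑ k ∈ Finset.range N, (χ (p (k+1)) - χ (p k)) = χ j - χ i := by
    rw [Finset.sum_range_sub (fun k => χ (p k)), hp0, hpN]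
  have hJd : (∑ k ∈ Finset.range N, Real.exp (F (p k)) * (χ (p (k+1)) - χ (p k)))
      - Real.exp (F T) * (χ j - χ i)
      = ∑ k ∈ Finset.range N,
          (Real.exp (F (p k)) - Real.exp (F T)) * (χ (p (k+1)) - χ (p k)) := by
    rw [← htel, Finset.mul_sum, ← Finset.sum_sub_distrib]
    exact Finset.sum_congr rfl fun k _ => by ring
  have hB1term : ∀ k, k < N →
      |(Real.exp (F (p k)) - Real.exp (F T)) * (χ (p (k+1)) - χ (p k))|
        ≤ (Real.exp (C * j) * (C * δ)) * (χ (p (k+1)) - χ (p k)) := by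
    intro k hk
    by_cases h1 : T ≤ p k
    · have e1 : χ (p k) = 1 := by rw [hχdef, if_pos h1]
      have e2 : χ (p (k+1)) = 1 := by
        rw [hχdef, if_pos (h1.trans (hpmono k (k+1) (Nat.le_succ k)))]
      rw [e1, e2]
      simp
    · by_cases h2 : T ≤ p (k+1)
      · have e1 : χ (p k) = 0 := by rw [hχdef, if_neg h1]
        have e2 : χ (p (k+1)) = 1 := by rw [hχdef, if_pos h2]
        rw [e1, e2]
        push_neg at h1
        have hpk1j : p (k+1) ≤ j := hpj (k+1) hk
        have hFpk : F (p k) ≤ C * j := hFub (p k) (hpnn k) ((hpmono k (k+1) (Nat.le_succ k)).trans hpk1j)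
        have hFT : F T ≤ C * j := hFub T hT (h2.trans hpk1j)
        have h3 := exp_sub_exp_le hFpk hFT
        have h4 : |F (p k) - F T| ≤ C * δ := by
          rw [abs_of_nonpos (by linarith [hmono (p k) T h1.le])]
          have h5 := hlip (p k) T h1.le
          have h6 : T - p k ≤ δ := by
            have := hpd k
            linarith
          nlinarith
        calc |(Real.exp (F (p k)) - Real.exp (F T)) * (1 - 0)|
            = |Real.exp (F (p k)) - Real.exp (F T)| := by rw [mul_one_sub, mul_zero, sub_zero]
          _ ≤ Real.exp (C * j) * |F (p k) - F T| := h3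
          _ ≤ Real.exp (C * j) * (C * δ) :=
              mul_le_mul_of_nonneg_left h4 (Real.exp_pos _).le
          _ = (Real.exp (C * j) * (C * δ)) * (1 - 0) := by ring
      · have e1 : χ (p k) = 0 := by rw [hχdef, if_neg h1]
        have e2 : χ (p (k+1)) = 0 := by rw [hχdef, if_neg h2]
        rw [e1, e2]
        simp
  have hχd01 : 0 ≤ χ j - χ i ∧ χ j - χ i ≤ 1 := by
    constructor
    · linarith [hχmono i j hij]
    · rcases hχ01 i with h|h <;> rcases hχ01 j with h'|h' <;> rw [h, h'] <;> norm_num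
  have hB1 : |(∑ k ∈ Finset.range N, Real.exp (F (p k)) * (χ (p (k+1)) - χ (p k)))
      - Real.exp (F T) * (χ j - χ i)| ≤ Real.exp (C * j) * (C * δ) := by
    rw [hJd]
    calc |∑ k ∈ Finset.range N,
          (Real.exp (F (p k)) - Real.exp (F T)) * (χ (p (k+1)) - χ (p k))|
        ≤ ∑ k ∈ Finset.range N,
            |(Real.exp (F (p k)) - Real.exp (F T)) * (χ (p (k+1)) - χ (p k))| :=
          Finset.abs_sum_le_sum_abs _ _
      _ ≤ ∑ k ∈ Finset.range N,
            (Real.exp (C * j) * (C * δ)) * (χ (p (k+1)) - χ (p k)) :=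
          Finset.sum_le_sum fun k hk => hB1term k (Finset.mem_range.1 hk)
      _ = (Real.exp (C * j) * (C * δ)) * (χ j - χ i) := by
          rw [← Finset.mul_sum, htel]
      _ ≤ (Real.exp (C * j) * (C * δ)) * 1 :=
          mul_le_mul_of_nonneg_left hχd01.2 (by positivity)
      _ = Real.exp (C * j) * (C * δ) := mul_one _
  -- Bound 2 : absolutely continuous part
  have hefint : ∀ a b : ℝ, 0 ≤ a → a ≤ b → b ≤ j →
      IntervalIntegrable (fun s => Real.exp (F s) * f s) volume a b := by
    intro a b ha hab hb
    have hem : Measurable fun s : ℝ => Real.exp (F s) * f s :=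
      (Real.measurable_exp.comp hFcont.measurable).mul hm
    apply intervalIntegrable_of_bdd' hem (C := Real.exp (C * j) * C)
    intro s hs
    rw [Set.uIoc_of_le hab] at hs
    have hFs : F s ≤ C * j := hFub s (by linarith [hs.1]) (hs.2.trans hb)
    rw [abs_mul, abs_of_nonneg (Real.exp_pos _).le]
    exact mul_le_mul (Real.exp_le_exp.2 hFs) (habs s) (abs_nonneg _) (by positivity)
  have hloc : ∀ a b : ℝ, 0 ≤ a → a ≤ b → b ≤ j → b - a ≤ δ →
      |(∫ s in a..b, g s) - Real.exp (F a) * (F (min b T) - F (min a T))|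
        ≤ (Real.exp (C * j) * C ^ 2 * δ) * (b - a) := by
    intro a b ha hab hb hd
    have hminle : min a T ≤ min b T := min_le_min hab le_rfl
    have hminnn : 0 ≤ min a T := le_min ha hT
    have hminbj : min b T ≤ b := min_le_left _ _
    -- integral of g equals integral of exp(F)*f over truncated interval
    have hgid : (∫ s in a..b, g s) = ∫ s in (min a T)..(min b T), Real.exp (F s) * f s := by
      rcases le_or_gt T a with h1 | h1
      · rw [min_eq_right h1, min_eq_right (h1.trans hab)]
        rw [intervalIntegral.integral_same]
        rw [show (∫ s in a..b, g s) = ∫ s in a..b, (0:ℝ) from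
          intervalIntegral.integral_congr_ae (ae_of_all _ (fun s hs => by
            rw [Set.uIoc_of_le hab] at hs
            simp only [hg, if_neg (not_le.2 (lt_of_le_of_lt h1 hs.1))]
            ring)), intervalIntegral.integral_zero]
      · rcases le_or_gt b T with h2 | h2
        · rw [min_eq_left (by linarith : a ≤ T), min_eq_left h2]
          apply intervalIntegral.integral_congr
          intro s hs
          rw [Set.uIcc_of_le hab] at hs
          simp only [hg, if_pos (hs.2.trans h2)]
          ring
        · rw [min_eq_left (by linarith : a ≤ T), min_eq_right h2.le]
          have hsp : (∫ s in a..T, g s) + (∫ s in T..b, g s) = ∫ s in a..b, g s :=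
            intervalIntegral.integral_add_adjacent_intervals
              (hgint a T ha (by linarith)) (hgint T b hT h2.le)
          have e1 : (∫ s in a..T, g s) = ∫ s in a..T, Real.exp (F s) * f s := by
            apply intervalIntegral.integral_congr
            intro s hs
            rw [Set.uIcc_of_le (by linarith : a ≤ T)] at hs
            simp only [hg, if_pos hs.2]
            ring
          have e2 : (∫ s in T..b, g s) = 0 := by
            rw [show (∫ s in T..b, g s) = ∫ s in T..b, (0:ℝ) from
              intervalIntegral.integral_congr_ae (ae_of_all _ (fun s hs => by
                rw [Set.uIoc_of_le h2.le] at hs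
                simp only [hg, if_neg (not_le.2 hs.1)]
                ring)), intervalIntegral.integral_zero]
          rw [← hsp, e1, e2, add_zero]
    have hFd : F (min b T) - F (min a T) = ∫ s in (min a T)..(min b T), f s := by
      linarith [hadd (min a T) (min b T)]
    have hcm : Real.exp (F a) * (F (min b T) - F (min a T))
        = ∫ s in (min a T)..(min b T), Real.exp (F a) * f s := by
      rw [intervalIntegral.integral_const_mul, ← hFd]
    rw [hgid, hcm, ← intervalIntegral.integral_sub
      (hefint _ _ hminnn hminle (hminbj.trans hb))
      (((hfint (min a T) (min b T))).const_mul _)]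
    have hptbd : ∀ s ∈ Set.uIoc (min a T) (min b T),
        ‖Real.exp (F s) * f s - Real.exp (F a) * f s‖ ≤ Real.exp (C * j) * (C * δ) * C := by
      intro s hs
      rw [Set.uIoc_of_le hminle] at hs
      have haT : a < T := by
        by_contra hc
        push_neg at hc
        rw [min_eq_right hc, min_eq_right (hc.trans hab)] at hs
        exact absurd hs.2 (not_le.2 hs.1)
      have hma : min a T = a := min_eq_left haT.le
      have hsa : a < s := by rw [hma] at hs; exact hs.1
      have hsb : s ≤ b := hs.2.trans hminbj
      have hFs : F s ≤ C * j := hFub s (by linarith) (by linarith)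
      have hFa : F a ≤ C * j := hFub a ha (by linarith)
      have h3 := exp_sub_exp_le hFs hFa
      have h4 : |F s - F a| ≤ C * δ := by
        rw [abs_of_nonneg (by linarith [hmono a s hsa.le])]
        have := hlip a s hsa.le
        nlinarith
      rw [show Real.exp (F s) * f s - Real.exp (F a) * f s
          = (Real.exp (F s) - Real.exp (F a)) * f s by ring]
      rw [Real.norm_eq_abs, abs_mul]
      have h5 : |Real.exp (F s) - Real.exp (F a)| ≤ Real.exp (C * j) * (C * δ) :=
        h3.trans (mul_le_mul_of_nonneg_left h4 (Real.exp_pos _).le)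
      exact mul_le_mul h5 (habs s) (abs_nonneg _) (by positivity)
    have h6 := intervalIntegral.norm_integral_le_of_norm_le_const hptbd
    rw [Real.norm_eq_abs] at h6
    have h7 : |min b T - min a T| ≤ b - a := by
      rw [abs_of_nonneg (by linarith)]
      rcases le_or_gt T a with h1 | h1
      · rw [min_eq_right h1, min_eq_right (h1.trans hab)]
        linarith
      · rw [min_eq_left h1.le]
        have := min_le_left b T
        linarith [min_le_left b T]
    calc |∫ s in (min a T)..(min b T), (Real.exp (F s) * f s - Real.exp (F a) * f s)|
        ≤ Real.exp (C * j) * (C * δ) * C * |min b T - min a T| := h6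
      _ ≤ Real.exp (C * j) * (C * δ) * C * (b - a) := by
          apply mul_le_mul_of_nonneg_left h7 (by positivity)
      _ = (Real.exp (C * j) * C ^ 2 * δ) * (b - a) := by ring
  have hIsplit : (∫ s in i..j, g s) = ∑ k ∈ Finset.range N, ∫ s in p k..p (k+1), g s := by
    have h := intervalIntegral.sum_integral_adjacent_intervals (a := p) (n := N)
      (fun k hk => hgint (p k) (p (k+1)) (hpnn k) (hpmono k (k+1) (Nat.le_succ k)))
    rw [hp0, hpN] at h
    exact h.symm
  have hB2 : |(∫ s in i..j, g s) - ∑ k ∈ Finset.range N,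
        Real.exp (F (p k)) * (F (min (p (k+1)) T) - F (min (p k) T))|
      ≤ Real.exp (C * j) * C ^ 2 * δ * (j - i) := by
    rw [hIsplit, ← Finset.sum_sub_distrib]
    calc |∑ k ∈ Finset.range N, ((∫ s in p k..p (k+1), g s)
          - Real.exp (F (p k)) * (F (min (p (k+1)) T) - F (min (p k) T)))|
        ≤ ∑ k ∈ Finset.range N, |(∫ s in p k..p (k+1), g s)
            - Real.exp (F (p k)) * (F (min (p (k+1)) T) - F (min (p k) T))| :=
          Finset.abs_sum_le_sum_abs _ _
      _ ≤ ∑ k ∈ Finset.range N, (Real.exp (C * j) * C ^ 2 * δ) * δ := by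
          apply Finset.sum_le_sum
          intro k hk
          have hk' := Finset.mem_range.1 hk
          have h := hloc (p k) (p (k+1)) (hpnn k) (hpmono k (k+1) (Nat.le_succ k))
            (hpj (k+1) hk') (by rw [hpd k])
          rw [hpd k] at h
          exact h
      _ = Real.exp (C * j) * C ^ 2 * δ * (j - i) := by
          rw [Finset.sum_const, Finset.card_range, nsmul_eq_mul]
          rw [hδdef]
          field_simp
  -- combine
  rw [hrw]
  have hfinal : Real.exp (C * j) * (C * δ) + Real.exp (C * j) * C ^ 2 * δ * (j - i)
      = Real.exp (C * j) * (C * (j - i) + C ^ 2 * (j - i) ^ 2) / N := by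
    rw [hδdef]
    field_simp
  calc |((∑ k ∈ Finset.range N, Real.exp (F (p k)) * (χ (p (k+1)) - χ (p k)))
        - ∑ k ∈ Finset.range N, Real.exp (F (p k))
            * (F (min (p (k+1)) T) - F (min (p k) T)))
      + (((if j < T then (1:ℝ) else 0) * Real.exp (F j))
        - ((if i < T then (1:ℝ) else 0) * Real.exp (F i)))|
      = |((∑ k ∈ Finset.range N, Real.exp (F (p k)) * (χ (p (k+1)) - χ (p k)))
          - Real.exp (F T) * (χ j - χ i))
        + ((∫ s in i..j, g s) - ∑ k ∈ Finset.range N, Real.exp (F (p k))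
            * (F (min (p (k+1)) T) - F (min (p k) T)))| := by
        rw [idA]
        congr 1
        ring
    _ ≤ |(∑ k ∈ Finset.range N, Real.exp (F (p k)) * (χ (p (k+1)) - χ (p k)))
          - Real.exp (F T) * (χ j - χ i)|
        + |(∫ s in i..j, g s) - ∑ k ∈ Finset.range N, Real.exp (F (p k))
            * (F (min (p (k+1)) T) - F (min (p k) T))| := abs_add_le _ _
    _ ≤ Real.exp (C * j) * (C * δ) + Real.exp (C * j) * C ^ 2 * δ * (j - i) :=
        add_le_add hB1 hB2
    _ = Real.exp (C * j) * (C * (j - i) + C ^ 2 * (j - i) ^ 2) / N := hfinal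

lemma lam_section_meas {Ω : Type*} {m0 : MeasurableSpace Ω} {𝒢 : Filtration ℝ m0}
    {lam : ℝ → Ω → ℝ} (h : ProgMeasurable 𝒢 lam) (ω : Ω) :
    Measurable fun s => lam s ω := by
  have hn : ∀ n : ℕ, Measurable fun s : ℝ => lam (min s n) ω := by
    intro n
    have h1 : @Measurable ℝ (Set.Iic (n:ℝ) × Ω) inferInstance
        (@Prod.instMeasurableSpace _ _ _ (𝒢 n))
        (fun s => ((⟨min s n, Set.mem_Iic.2 (min_le_right s n)⟩ : Set.Iic (n:ℝ)), ω)) := by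
      apply Measurable.prodMk
      · exact (measurable_id.min measurable_const).subtype_mk
      · exact @measurable_const Ω ℝ (𝒢 n) _ ω
    exact ((h n).measurable).comp h1
  apply measurable_of_tendsto_metrizable' Filter.atTop hn
  rw [tendsto_pi_nhds]
  intro s
  apply Filter.Tendsto.congr' ?_ tendsto_const_nhds
  rw [Filter.EventuallyEq, Filter.eventually_atTop]
  refine ⟨⌈s⌉₊, fun n hns => ?_⟩
  have : s ≤ (n:ℝ) := (Nat.le_ceil s).trans (by exact_mod_cast hns)
  rw [min_eq_left this]

lemma lam_integral_meas {Ω : Type*} {m0 : MeasurableSpace Ω} {𝒢 : Filtration ℝ m0}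
    {lam : ℝ → Ω → ℝ} (h : ProgMeasurable 𝒢 lam) {i : ℝ} (hi : 0 ≤ i) :
    StronglyMeasurable[𝒢 i] fun ω => ∫ s in (0:ℝ)..i, lam s ω := by
  have hjoint : @StronglyMeasurable (Ω × ℝ) ℝ _ ((𝒢 i).prod inferInstance)
      (fun p : Ω × ℝ => Set.indicator (Set.Ioc (0:ℝ) i) (fun _ => (1:ℝ)) p.2
        * lam (min p.2 i) p.1) := by
    apply StronglyMeasurable.mul
    · apply Measurable.stronglyMeasurable
      exact (Measurable.indicator measurable_const measurableSet_Ioc).comp measurable_snd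
    · have h1 : @Measurable (Ω × ℝ) (Set.Iic i × Ω) ((𝒢 i).prod inferInstance)
          (@Prod.instMeasurableSpace _ _ _ (𝒢 i))
          (fun p : Ω × ℝ => ((⟨min p.2 i, Set.mem_Iic.2 (min_le_right _ _)⟩ : Set.Iic i), p.1)) := by
        apply Measurable.prodMk
        · exact (measurable_snd.min measurable_const).subtype_mk
        · exact @measurable_fst Ω ℝ (𝒢 i) _
      exact ((h i).measurable.comp h1).stronglyMeasurable
  have key : StronglyMeasurable[𝒢 i] fun ω =>
      ∫ s, Set.indicator (Set.Ioc (0:ℝ) i) (fun _ => (1:ℝ)) s * lam (min s i) ω ∂volume :=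
    @MeasureTheory.StronglyMeasurable.integral_prod_right' Ω ℝ ℝ (𝒢 i) _ volume _ _ _ _ hjoint
  have heq : (fun ω => ∫ s in (0:ℝ)..i, lam s ω)
      = fun ω => ∫ s, Set.indicator (Set.Ioc (0:ℝ) i) (fun _ => (1:ℝ)) s
          * lam (min s i) ω ∂volume := by
    funext ω
    rw [intervalIntegral.integral_of_le hi, ← integral_indicator measurableSet_Ioc]
    congr 1
    funext s
    by_cases hs : s ∈ Set.Ioc (0:ℝ) i
    · rw [Set.indicator_of_mem hs, Set.indicator_of_mem hs, min_eq_left hs.2, one_mul]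
    · rw [Set.indicator_of_notMem hs, Set.indicator_of_notMem hs, zero_mul]
  rw [heq]
  exact key

set_option maxHeartbeats 1000000 in
/-- If `M_t = 1_{t≥τ} − ∫₀^{t∧τ} λ_s ds` is a `𝔾`-martingale (i.e. `τ` has intensity `λ`),
then `L_t = 1_{τ>t} exp(∫₀^t λ_s ds)` is a `𝔾`-martingale and satisfies the pathwise
integral identity expressing `dL_t = −exp(∫₀^t λ_s ds) dM_t`. -/
theorem survival_exponential_martingale {Ω : Type*} {m0 : MeasurableSpace Ω}
    (μ : Measure Ω) [IsProbabilityMeasure μ]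
    (𝒢 : Filtration ℝ m0) (τ : Ω → ℝ) (hτ : IsStoppingTime 𝒢 (fun ω => (τ ω : WithTop ℝ))) (hτpos : ∀ ω, 0 ≤ τ ω)
    (lam : ℝ → Ω → ℝ) (hlam_nonneg : ∀ s ω, 0 ≤ lam s ω)
    (Clam : ℝ) (hlam_bdd : ∀ s ω, lam s ω ≤ Clam) (hlam_prog : ProgMeasurable 𝒢 lam)
    (hM : Martingale
      (fun t ω => Set.indicator {ω' | τ ω' ≤ t} (fun _ => (1 : ℝ)) ω
        - ∫ s in (0:ℝ)..(min t (τ ω)), lam s ω) 𝒢 μ) :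
    Martingale
      (fun t ω => Set.indicator {ω' | t < τ ω'} (fun _ => (1 : ℝ)) ω
        * Real.exp (∫ s in (0:ℝ)..t, lam s ω)) 𝒢 μ ∧
    ∀ t : ℝ, 0 ≤ t → ∀ ω,
      Set.indicator {ω' | t < τ ω'} (fun _ => (1 : ℝ)) ω
          * Real.exp (∫ s in (0:ℝ)..t, lam s ω)
        = 1 + (∫ s in (0:ℝ)..t,
              Real.exp (∫ u in (0:ℝ)..s, lam u ω) * lam s ω
                * Set.indicator {s' : ℝ | s' ≤ τ ω} (fun _ => (1 : ℝ)) s)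
          - Real.exp (∫ u in (0:ℝ)..(τ ω), lam u ω)
              * Set.indicator {ω' | τ ω' ≤ t} (fun _ => (1 : ℝ)) ω := by
  have hmΛ : ∀ ω, Measurable fun s => lam s ω := fun ω => lam_section_meas hlam_prog ω
  have hne : Nonempty Ω := by
    by_contra h
    rw [not_nonempty_iff] at h
    have h1 : μ Set.univ = 1 := measure_univ
    rw [Set.univ_eq_empty_iff.2 h, measure_empty] at h1
    exact zero_ne_one h1
  obtain ⟨ω0⟩ := hne
  have hC0 : 0 ≤ Clam := (hlam_nonneg 0 ω0).trans (hlam_bdd 0 ω0)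
  set Mf : ℝ → Ω → ℝ := fun t ω => Set.indicator {ω' | τ ω' ≤ t} (fun _ => (1 : ℝ)) ω
    - ∫ s in (0:ℝ)..(min t (τ ω)), lam s ω with hMfdef
  set L : ℝ → Ω → ℝ := fun t ω => Set.indicator {ω' | t < τ ω'} (fun _ => (1 : ℝ)) ω
    * Real.exp (∫ s in (0:ℝ)..t, lam s ω) with hLdef
  -- per-ω primitive facts
  have hΛadd : ∀ (ω : Ω) (a b : ℝ), (∫ u in (0:ℝ)..a, lam u ω) + (∫ s in a..b, lam s ω)
      = ∫ u in (0:ℝ)..b, lam u ω := by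
    intro ω a b
    have habs : ∀ s, |lam s ω| ≤ Clam := fun s => abs_le.2
      ⟨by linarith [hlam_nonneg s ω, (hlam_nonneg s ω).trans (hlam_bdd s ω)], hlam_bdd s ω⟩
    exact intervalIntegral.integral_add_adjacent_intervals
      (intervalIntegrable_of_bdd' (hmΛ ω) (fun s _ => habs s))
      (intervalIntegrable_of_bdd' (hmΛ ω) (fun s _ => habs s))
  have hΛmono : ∀ (ω : Ω) (a b : ℝ), a ≤ b →
      (∫ u in (0:ℝ)..a, lam u ω) ≤ ∫ u in (0:ℝ)..b, lam u ω := by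
    intro ω a b hab
    have h1 : 0 ≤ ∫ s in a..b, lam s ω :=
      intervalIntegral.integral_nonneg hab (fun s _ => hlam_nonneg s ω)
    linarith [hΛadd ω a b]
  have hΛlip : ∀ (ω : Ω) (a b : ℝ), a ≤ b →
      (∫ u in (0:ℝ)..b, lam u ω) - (∫ u in (0:ℝ)..a, lam u ω) ≤ Clam * (b - a) := by
    intro ω a b hab
    have habs : ∀ s, |lam s ω| ≤ Clam := fun s => abs_le.2
      ⟨by linarith [hlam_nonneg s ω, (hlam_nonneg s ω).trans (hlam_bdd s ω)], hlam_bdd s ω⟩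
    have h1 : (∫ s in a..b, lam s ω) ≤ ∫ s in a..b, Clam := by
      apply intervalIntegral.integral_mono_on hab
        (intervalIntegrable_of_bdd' (hmΛ ω) (fun s _ => habs s)) intervalIntegrable_const
      exact fun s _ => hlam_bdd s ω
    rw [intervalIntegral.integral_const, smul_eq_mul] at h1
    have := hΛadd ω a b; nlinarith
  have hΛ00 : ∀ ω : Ω, (∫ u in (0:ℝ)..(0:ℝ), lam u ω) = 0 := fun ω =>
    intervalIntegral.integral_same
  -- adaptedness of L
  have hadapt : StronglyAdapted 𝒢 L := by
    intro t
    rcases le_or_gt 0 t with ht | ht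
    · have h1 : MeasurableSet[𝒢 t] {ω' | τ ω' ≤ t} := by simpa using hτ t
      have hset : {ω' | t < τ ω'} = {ω' | τ ω' ≤ t}ᶜ := by
        ext ω'; simp [not_le]
      have h2 : StronglyMeasurable[𝒢 t]
          fun ω => Set.indicator {ω' | t < τ ω'} (fun _ => (1:ℝ)) ω := by
        rw [hset]
        exact stronglyMeasurable_const.indicator h1.compl
      exact h2.mul
        (Real.continuous_exp.comp_stronglyMeasurable (lam_integral_meas hlam_prog ht))
    · have heq : (L t) = fun ω => Real.exp (-(Mf t ω)) := by
        funext ω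
        have h1 : Set.indicator {ω' | t < τ ω'} (fun _ => (1:ℝ)) ω = 1 :=
          Set.indicator_of_mem (Set.mem_setOf_eq ▸ lt_of_lt_of_le ht (hτpos ω)) _
        have h2 : min t (τ ω) = t := min_eq_left (ht.le.trans (hτpos ω))
        have h3 : Set.indicator {ω' | τ ω' ≤ t} (fun _ => (1:ℝ)) ω = 0 :=
          Set.indicator_of_notMem (by
            simp only [Set.mem_setOf_eq, not_le]
            linarith [hτpos ω]) _
        simp only [hLdef, hMfdef, h1, h2, h3, one_mul, zero_sub, neg_neg]
      rw [heq]
      exact Real.continuous_exp.comp_stronglyMeasurable (hM.stronglyAdapted t).neg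
  -- integrability
  have hMint : ∀ t, Integrable (Mf t) μ := by
    intro t
    have hsm : StronglyMeasurable (Mf t) := (hM.stronglyAdapted t).mono (𝒢.le t)
    apply Integrable.mono' (integrable_const (1 + Clam * |t|)) hsm.aestronglyMeasurable
    apply ae_of_all
    intro ω
    have hind : |Set.indicator {ω' | τ ω' ≤ t} (fun _ => (1:ℝ)) ω| ≤ 1 := by
      rw [Set.indicator_apply]
      split <;> norm_num
    have hΛbd : |∫ s in (0:ℝ)..(min t (τ ω)), lam s ω| ≤ Clam * |t| := by
      rcases le_or_gt 0 t with ht | ht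
      · have hm0 : 0 ≤ min t (τ ω) := le_min ht (hτpos ω)
        have hmt : min t (τ ω) ≤ t := min_le_left _ _
        have h1 := hΛmono ω 0 (min t (τ ω)) hm0
        have h2 := hΛlip ω 0 (min t (τ ω)) hm0
        rw [hΛ00 ω] at h1 h2
        rw [abs_of_nonneg h1, abs_of_nonneg ht]
        nlinarith
      · have hmt : min t (τ ω) = t := min_eq_left (ht.le.trans (hτpos ω))
        rw [hmt]
        have h1 := hΛmono ω t 0 ht.le
        have h2 := hΛlip ω t 0 ht.le
        rw [hΛ00 ω] at h1 h2
        rw [abs_of_nonpos (by linarith), abs_of_neg ht]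
        nlinarith
    rw [hMfdef]
    simp only [Real.norm_eq_abs]
    calc |Set.indicator {ω' | τ ω' ≤ t} (fun _ => (1:ℝ)) ω
          - ∫ s in (0:ℝ)..(min t (τ ω)), lam s ω|
        ≤ |Set.indicator {ω' | τ ω' ≤ t} (fun _ => (1:ℝ)) ω|
          + |∫ s in (0:ℝ)..(min t (τ ω)), lam s ω| := abs_sub _ _
      _ ≤ 1 + Clam * |t| := add_le_add hind hΛbd
  have hLint : ∀ t, Integrable (L t) μ := by
    intro t
    have hsm : StronglyMeasurable (L t) := (hadapt t).mono (𝒢.le t)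
    apply Integrable.mono' (integrable_const (Real.exp (Clam * max t 0)))
      hsm.aestronglyMeasurable
    apply ae_of_all
    intro ω
    have hind : |Set.indicator {ω' | t < τ ω'} (fun _ => (1:ℝ)) ω| ≤ 1 := by
      rw [Set.indicator_apply]
      split <;> norm_num
    have hΛub : (∫ s in (0:ℝ)..t, lam s ω) ≤ Clam * max t 0 := by
      rcases le_or_gt 0 t with ht | ht
      · have h2 := hΛlip ω 0 t ht
        rw [hΛ00 ω] at h2
        rw [max_eq_left ht]
        linarith
      · have h1 := hΛmono ω t 0 ht.le
        rw [hΛ00 ω] at h1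
        rw [max_eq_right ht.le, mul_zero]
        linarith
    rw [hLdef]
    simp only [Real.norm_eq_abs, abs_mul]
    calc |Set.indicator {ω' | t < τ ω'} (fun _ => (1:ℝ)) ω|
          * |Real.exp (∫ s in (0:ℝ)..t, lam s ω)|
        ≤ 1 * Real.exp (Clam * max t 0) := by
          apply mul_le_mul hind ?_ (abs_nonneg _) zero_le_one
          rw [abs_of_nonneg (Real.exp_pos _).le]
          exact Real.exp_le_exp.2 hΛub
      _ = Real.exp (Clam * max t 0) := one_mul _
  -- pathwise identity (part 2)
  have part2 : ∀ t : ℝ, 0 ≤ t → ∀ ω, L t ω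
      = 1 + (∫ s in (0:ℝ)..t, Real.exp (∫ u in (0:ℝ)..s, lam u ω) * lam s ω
            * Set.indicator {s' : ℝ | s' ≤ τ ω} (fun _ => (1:ℝ)) s)
        - Real.exp (∫ u in (0:ℝ)..(τ ω), lam u ω)
            * Set.indicator {ω' | τ ω' ≤ t} (fun _ => (1:ℝ)) ω := by
    intro t ht ω
    have h := pathwise (hmΛ ω) (fun s => hlam_nonneg s ω) (fun s => hlam_bdd s ω)
      ht (hτpos ω)
    simp only [hLdef, Set.indicator_apply, Set.mem_setOf_eq]
    exact h
  -- negative times : the cumulative intensity vanishes a.e.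
  have hMf_neg : ∀ t : ℝ, t < 0 → Mf t = fun ω => -(∫ u in (0:ℝ)..t, lam u ω) := by
    intro t ht
    funext ω
    have h2 : min t (τ ω) = t := min_eq_left (ht.le.trans (hτpos ω))
    have h3 : Set.indicator {ω' | τ ω' ≤ t} (fun _ => (1:ℝ)) ω = 0 :=
      Set.indicator_of_notMem (by
        simp only [Set.mem_setOf_eq, not_le]
        linarith [hτpos ω]) _
    simp only [hMfdef, h2, h3, zero_sub]
  have hΛ0ae : ∀ i : ℝ, i < 0 → (∀ᵐ ω ∂μ, (∫ u in (0:ℝ)..i, lam u ω) = 0) := by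
    intro i hi
    have hstep : ∀ n : ℕ, ∀ᵐ ω ∂μ,
        (∫ u in (0:ℝ)..(i/((n:ℝ)+1)), lam u ω) = ∫ u in (0:ℝ)..i, lam u ω := by
      intro n
      have hnpos : (0:ℝ) < (n:ℝ)+1 := by positivity
      have hjneg : i/((n:ℝ)+1) < 0 := div_neg_of_neg_of_pos hi hnpos
      have hij : i ≤ i/((n:ℝ)+1) := by
        rw [le_div_iff₀ hnpos]
        nlinarith
      have h1 := hM.condExp_ae_eq hij
      rw [hMf_neg i hi, hMf_neg _ hjneg] at h1
      -- h1 : μ[(fun ω => -Λ_{jn} ω)|𝒢 i] =ᵐ fun ω => -Λ_i ω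
      set D : Ω → ℝ := fun ω => (∫ u in (0:ℝ)..(i/((n:ℝ)+1)), lam u ω)
        - ∫ u in (0:ℝ)..i, lam u ω with hD
      have hDint : Integrable D μ := by
        have e1 : Integrable (fun ω => ∫ u in (0:ℝ)..(i/((n:ℝ)+1)), lam u ω) μ :=
          (hMint (i/((n:ℝ)+1))).neg.congr (ae_of_all _ fun ω => by
            simp [Pi.neg_apply, hMf_neg _ hjneg])
        have e2 : Integrable (fun ω => ∫ u in (0:ℝ)..i, lam u ω) μ :=
          (hMint i).neg.congr (ae_of_all _ fun ω => by
            simp [Pi.neg_apply, hMf_neg i hi])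
        exact e1.sub e2
      have hDnn : 0 ≤ D := by
        intro ω
        have h0 := hΛmono ω i (i/((n:ℝ)+1)) hij
        have : (0:ℝ) ≤ D ω := by rw [hD]; dsimp only; linarith
        exact this
      have hDcond : μ[D|𝒢 i] =ᵐ[μ] 0 := by
        have e1 : Integrable (fun ω => -(∫ u in (0:ℝ)..(i/((n:ℝ)+1)), lam u ω)) μ := by
          have := hMint (i/((n:ℝ)+1)); rwa [hMf_neg _ hjneg] at this
        have e2 : Integrable (fun ω => -(∫ u in (0:ℝ)..i, lam u ω)) μ := by
          have := hMint i; rwa [hMf_neg i hi] at this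
        have h2 := condExp_sub (m := 𝒢 i) (μ := μ) e2 e1
        have h3 : μ[(fun ω => -(∫ u in (0:ℝ)..i, lam u ω))|𝒢 i]
            = fun ω => -(∫ u in (0:ℝ)..i, lam u ω) := by
          apply condExp_of_stronglyMeasurable (𝒢.le i)
          · have := hM.stronglyAdapted i
            rwa [hMf_neg i hi] at this
          · exact e2
        have hDeq : D = (fun ω => -(∫ u in (0:ℝ)..i, lam u ω))
            - fun ω => -(∫ u in (0:ℝ)..(i/((n:ℝ)+1)), lam u ω) := by
          funext ω
          simp only [hD, Pi.sub_apply]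
          ring
        rw [hDeq]
        refine h2.trans ?_
        rw [h3]
        filter_upwards [h1] with ω hω
        simp only [Pi.sub_apply, Pi.zero_apply, hω]
        ring
      have hDzero : ∫ ω, D ω ∂μ = 0 := by
        have h := integral_condExp (𝒢.le i) (f := D) (μ := μ)
        rw [integral_congr_ae hDcond] at h
        simpa using h.symm
      have hD0 : D =ᵐ[μ] 0 := (integral_eq_zero_iff_of_nonneg hDnn hDint).1 hDzero
      filter_upwards [hD0] with ω hω
      have : D ω = 0 := hω
      simp only [hD] at this
      linarith
    have hall := ae_all_iff.2 hstep
    filter_upwards [hall] with ω hω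
    have hbd : ∀ n : ℕ, ‖∫ u in (0:ℝ)..(i/((n:ℝ)+1)), lam u ω‖
        ≤ Clam * (-i) / ((n:ℝ)+1) := by
      intro n
      have hnpos : (0:ℝ) < (n:ℝ)+1 := by positivity
      have hjneg : i/((n:ℝ)+1) < 0 := div_neg_of_neg_of_pos hi hnpos
      have h1 := hΛmono ω (i/((n:ℝ)+1)) 0 hjneg.le
      have h2 := hΛlip ω (i/((n:ℝ)+1)) 0 hjneg.le
      rw [hΛ00 ω] at h1 h2
      rw [Real.norm_eq_abs, abs_of_nonpos (by linarith)]
      calc -(∫ u in (0:ℝ)..(i/((n:ℝ)+1)), lam u ω)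
          ≤ Clam * (0 - i/((n:ℝ)+1)) := by linarith
        _ = Clam * (-i) / ((n:ℝ)+1) := by ring
    have htd : Filter.Tendsto (fun n : ℕ => Clam * (-i) / ((n:ℝ)+1))
        Filter.atTop (𝓝 0) := by
      have h := (tendsto_const_div_atTop_nhds_zero_nat (Clam * (-i))).comp
        (Filter.tendsto_add_atTop_nat 1)
      have heq : (fun n : ℕ => Clam * (-i) / ((n:ℝ)+1))
          = (fun n : ℕ => Clam * (-i) / (n:ℝ)) ∘ (fun n => n + 1) := by
        funext n
        simp only [Function.comp_apply]
        push_cast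
        ring
      rw [heq]
      exact h
    have hconv : Filter.Tendsto (fun n : ℕ => ∫ u in (0:ℝ)..(i/((n:ℝ)+1)), lam u ω)
        Filter.atTop (𝓝 0) := squeeze_zero_norm hbd htd
    have hconst : (fun n : ℕ => ∫ u in (0:ℝ)..(i/((n:ℝ)+1)), lam u ω)
        = fun _ => ∫ u in (0:ℝ)..i, lam u ω := funext hω
    rw [hconst] at hconv
    exact tendsto_nhds_unique tendsto_const_nhds hconv
  have hLneg : ∀ i : ℝ, i < 0 → (L i =ᵐ[μ] fun _ => (1:ℝ)) := by
    intro i hi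
    filter_upwards [hΛ0ae i hi] with ω hω
    have h1 : Set.indicator {ω' | i < τ ω'} (fun _ => (1:ℝ)) ω = 1 :=
      Set.indicator_of_mem (Set.mem_setOf_eq ▸ lt_of_lt_of_le hi (hτpos ω)) _
    simp only [hLdef, h1, hω, Real.exp_zero, mul_one]
  -- main case
  have hmain : ∀ i j : ℝ, 0 ≤ i → i ≤ j → μ[L j|𝒢 i] =ᵐ[μ] L i := by
    intro i j h0i hij
    have h0j : 0 ≤ j := h0i.trans hij
    set K : ℝ := Real.exp (Clam * j) * (Clam * (j - i) + Clam ^ 2 * (j - i) ^ 2) with hK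
    have hK0 : 0 ≤ K := by
      rw [hK]
      have h1 : 0 ≤ Clam * (j - i) := mul_nonneg hC0 (by linarith)
      have h2 : 0 ≤ Clam ^ 2 * (j - i) ^ 2 := by positivity
      nlinarith [Real.exp_pos (Clam * j)]
    -- the conditional expectation of the difference is bounded by K/(n+1) for every n
    have hbound : ∀ n : ℕ, ∀ᵐ ω ∂μ,
        |(μ[(fun ω => L j ω - L i ω)|𝒢 i]) ω| ≤ K / ((n:ℝ)+1) := by
      intro n
      set N : ℕ := n + 1 with hNdef
      have hN : 0 < N := Nat.succ_pos n
      have hNR : ((n:ℝ)+1) = (N:ℝ) := by rw [hNdef]; push_cast; ring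
      set p : ℕ → ℝ := fun k => i + (k:ℝ) * (j - i) / (N:ℝ) with hp
      have hpmono : ∀ l k : ℕ, l ≤ k → p l ≤ p k := by
        intro l k hl
        simp only [hp]
        have hlk : (l:ℝ) ≤ k := by exact_mod_cast hl
        have hNp : (0:ℝ) < N := by exact_mod_cast hN
        gcongr
      have hp0 : p 0 = i := by rw [hp]; simp
      have hpi : ∀ k, i ≤ p k := fun k => hp0 ▸ hpmono 0 k (Nat.zero_le k)
      have hpnn : ∀ k, 0 ≤ p k := fun k => h0i.trans (hpi k)
      set X : Ω → ℝ := fun ω => ∑ k ∈ Finset.range N,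
        Real.exp (∫ u in (0:ℝ)..(p k), lam u ω) * (Mf (p (k+1)) ω - Mf (p k) ω) with hXdef
      -- integrability of each summand
      have hterm_int : ∀ k : ℕ, Integrable
          (fun ω => Real.exp (∫ u in (0:ℝ)..(p k), lam u ω)
            * (Mf (p (k+1)) ω - Mf (p k) ω)) μ := by
        intro k
        apply Integrable.bdd_mul (c := Real.exp (Clam * p k)) ((hMint (p (k+1))).sub (hMint (p k)))
        · exact ((Real.continuous_exp.comp_stronglyMeasurable
            ((lam_integral_meas hlam_prog (hpnn k)).mono (𝒢.le (p k))))).aestronglyMeasurable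
        · refine ae_of_all _ fun ω => ?_
          rw [Real.norm_eq_abs, abs_of_nonneg (Real.exp_pos _).le]
          apply Real.exp_le_exp.2
          have := hΛlip ω 0 (p k) (hpnn k)
          rw [hΛ00 ω] at this
          linarith
      have hXint : Integrable X μ := by
        rw [hXdef]
        exact integrable_finset_sum _ (fun k _ => hterm_int k)
      -- (a) conditional expectation of X vanishes
      have hcondX : μ[X|𝒢 i] =ᵐ[μ] 0 := by
        have hterm0 : ∀ k : ℕ, μ[(fun ω => Real.exp (∫ u in (0:ℝ)..(p k), lam u ω)
            * (Mf (p (k+1)) ω - Mf (p k) ω))|𝒢 i] =ᵐ[μ] 0 := by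
          intro k
          have hik : i ≤ p k := hpi k
          have hadj : p k ≤ p (k+1) := hpmono k (k+1) (Nat.le_succ k)
          -- conditional expectation at time p k of the increment vanishes
          have hdiff0 : μ[(fun ω => Mf (p (k+1)) ω - Mf (p k) ω)|𝒢 (p k)] =ᵐ[μ] 0 := by
            have h1 : (fun ω => Mf (p (k+1)) ω - Mf (p k) ω)
                = Mf (p (k+1)) - Mf (p k) := rfl
            rw [h1]
            have h2 := condExp_sub (m := 𝒢 (p k)) (μ := μ)
              (hMint (p (k+1))) (hMint (p k))
            refine h2.trans ?_
            have h3 : μ[Mf (p (k+1))|𝒢 (p k)] =ᵐ[μ] Mf (p k) := hM.condExp_ae_eq hadj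
            have h4 : μ[Mf (p k)|𝒢 (p k)] = Mf (p k) :=
              condExp_of_stronglyMeasurable (𝒢.le (p k)) (hM.stronglyAdapted (p k)) (hMint (p k))
            rw [h4]
            filter_upwards [h3] with ω hω
            simp only [Pi.sub_apply, Pi.zero_apply, hω]
            ring
          have hexp_meas : StronglyMeasurable[𝒢 (p k)]
              (fun ω => Real.exp (∫ u in (0:ℝ)..(p k), lam u ω)) :=
            Real.continuous_exp.comp_stronglyMeasurable
              (lam_integral_meas hlam_prog (hpnn k))
          have hpull := condExp_mul_of_stronglyMeasurable_left (m := 𝒢 (p k)) (μ := μ) hexp_meas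
            (by
              have := hterm_int k
              exact this)
            ((hMint (p (k+1))).sub (hMint (p k)))
          have hstep1 : μ[(fun ω => Real.exp (∫ u in (0:ℝ)..(p k), lam u ω)
              * (Mf (p (k+1)) ω - Mf (p k) ω))|𝒢 (p k)] =ᵐ[μ] 0 := by
            refine hpull.trans ?_
            filter_upwards [hdiff0] with ω hω
            simp only [Pi.mul_apply, Pi.zero_apply]
            have hω' : (μ[(fun ω => Mf (p (k+1)) ω - Mf (p k) ω)|𝒢 (p k)]) ω = 0 := hω
            rw [show (μ[Mf (p (k+1)) - Mf (p k)|𝒢 (p k)]) ω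
                = (μ[(fun ω => Mf (p (k+1)) ω - Mf (p k) ω)|𝒢 (p k)]) ω from rfl, hω']
            ring
          have htower := (condExp_condExp_of_le (𝒢.mono hik) (𝒢.le (p k))
            (f := fun ω => Real.exp (∫ u in (0:ℝ)..(p k), lam u ω)
              * (Mf (p (k+1)) ω - Mf (p k) ω)) (μ := μ)).symm
          refine htower.trans ?_
          have h5 : μ[μ[(fun ω => Real.exp (∫ u in (0:ℝ)..(p k), lam u ω)
              * (Mf (p (k+1)) ω - Mf (p k) ω))|𝒢 (p k)]|𝒢 i]
              =ᵐ[μ] μ[(0 : Ω → ℝ)|𝒢 i] := condExp_congr_ae hstep1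
          refine h5.trans ?_
          rw [condExp_zero]
        have hXsum : X = ∑ k ∈ Finset.range N,
            (fun ω => Real.exp (∫ u in (0:ℝ)..(p k), lam u ω)
              * (Mf (p (k+1)) ω - Mf (p k) ω)) := by
          funext ω
          rw [hXdef, Finset.sum_apply]
        rw [hXsum]
        have hsum := condExp_finset_sum (m := 𝒢 i) (μ := μ)
          (fun k (_ : k ∈ Finset.range N) => hterm_int k)
        refine hsum.trans ?_
        have hae : ∀ᵐ ω ∂μ, ∀ k, k < N →
            (μ[(fun ω => Real.exp (∫ u in (0:ℝ)..(p k), lam u ω)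
              * (Mf (p (k+1)) ω - Mf (p k) ω))|𝒢 i]) ω = 0 := by
          rw [ae_all_iff]
          intro k
          rcases lt_or_ge k N with hk | hk
          · filter_upwards [hterm0 k] with ω hω
            intro _
            exact hω
          · filter_upwards with ω
            intro hcon
            exact absurd hcon (not_lt.2 hk)
        filter_upwards [hae] with ω hω
        rw [Finset.sum_apply]
        simp only [Pi.zero_apply]
        exact Finset.sum_eq_zero fun k hk => hω k (Finset.mem_range.1 hk)
      -- (b) pointwise bound
      have hXbd : ∀ ω, |X ω + (L j ω - L i ω)| ≤ K / (N:ℝ) := by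
        intro ω
        have h := approx_bound (F := fun s => ∫ u in (0:ℝ)..s, lam u ω)
          (χ := fun t => if τ ω ≤ t then (1:ℝ) else 0) (p := p)
          (hmΛ ω) (fun s => hlam_nonneg s ω) (fun s => hlam_bdd s ω)
          (hτpos ω) h0i hij hN (fun s => rfl) (fun t => rfl) (fun k => by rw [hp])
        rw [hK]
        simp only [hXdef, hLdef, hMfdef, Set.indicator_apply, Set.mem_setOf_eq]
        exact h
      -- combine
      have hYint : Integrable (fun ω => L j ω - L i ω) μ := (hLint j).sub (hLint i)
      have hsplit : μ[(fun ω => L j ω - L i ω)|𝒢 i]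
          =ᵐ[μ] μ[(fun ω => L j ω - L i ω + X ω)|𝒢 i] - μ[X|𝒢 i] := by
        have h1 : (fun ω => L j ω - L i ω)
            = (fun ω => L j ω - L i ω + X ω) - X := by
          funext ω
          simp only [Pi.sub_apply]
          ring
        nth_rewrite 1 [h1]
        exact condExp_sub (hYint.add hXint) hXint _
      have habs : ∀ᵐ ω ∂μ, |(μ[(fun ω => L j ω - L i ω + X ω)|𝒢 i]) ω| ≤ K / (N:ℝ) := by
        have hKN0 : 0 ≤ K / (N:ℝ) := by positivity
        have hb : ∀ᵐ ω ∂μ, |L j ω - L i ω + X ω| ≤ ((K / (N:ℝ)).toNNReal : ℝ) := by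
          filter_upwards with ω
          rw [Real.coe_toNNReal _ hKN0, add_comm]
          exact hXbd ω
        filter_upwards [ae_bdd_condExp_of_ae_bdd hb] with ω hω
        rwa [Real.coe_toNNReal _ hKN0] at hω
      filter_upwards [hsplit, habs, hcondX] with ω h1 h2 h3
      rw [hNR]
      have h4 : (μ[(fun ω => L j ω - L i ω)|𝒢 i]) ω
          = (μ[(fun ω => L j ω - L i ω + X ω)|𝒢 i]) ω - (μ[X|𝒢 i]) ω := by
        rw [h1]; simp [Pi.sub_apply]
      rw [h4, h3]
      simpa using h2
    -- deduce that the conditional difference vanishes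
    have hzero : μ[(fun ω => L j ω - L i ω)|𝒢 i] =ᵐ[μ] 0 := by
      have hall := ae_all_iff.2 hbound
      filter_upwards [hall] with ω hω
      have htd : Filter.Tendsto (fun n : ℕ => K / ((n:ℝ)+1)) Filter.atTop (𝓝 0) := by
        have h := (tendsto_const_div_atTop_nhds_zero_nat K).comp
          (Filter.tendsto_add_atTop_nat 1)
        have heq : (fun n : ℕ => K / ((n:ℝ)+1))
            = (fun n : ℕ => K / (n:ℝ)) ∘ (fun n => n + 1) := by
          funext n
          simp only [Function.comp_apply]
          push_cast
          ring
        rw [heq]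
        exact h
      have hle : |(μ[(fun ω => L j ω - L i ω)|𝒢 i]) ω| ≤ 0 :=
        ge_of_tendsto htd (Filter.Eventually.of_forall hω)
      simp only [Pi.zero_apply]
      exact abs_eq_zero.1 (le_antisymm hle (abs_nonneg _))
    -- conclude
    have hLjdec : L j = fun ω => (L j ω - L i ω) + L i ω := by
      funext ω; ring
    have h1 : μ[L j|𝒢 i] =ᵐ[μ] μ[(fun ω => L j ω - L i ω)|𝒢 i] + μ[L i|𝒢 i] := by
      nth_rewrite 1 [hLjdec]
      have h2 : (fun ω => (L j ω - L i ω) + L i ω)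
          = (fun ω => L j ω - L i ω) + L i := rfl
      rw [h2]
      exact condExp_add ((hLint j).sub (hLint i)) (hLint i) _
    have h3 : μ[L i|𝒢 i] = L i :=
      condExp_of_stronglyMeasurable (𝒢.le i) (hadapt i) (hLint i)
    filter_upwards [h1, hzero] with ω hω h0
    rw [hω]
    simp only [Pi.add_apply, h3, h0, Pi.zero_apply]
    ring
  refine ⟨⟨hadapt, ?_⟩, part2⟩
  intro i j hij
  rcases le_or_gt 0 i with h0i | h0i
  · exact hmain i j h0i hij
  · rcases le_or_gt 0 j with h0j | h0j
    · have h1 : μ[L j|𝒢 0] =ᵐ[μ] L 0 := hmain 0 j le_rfl h0j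
      have h2 : μ[μ[L j|𝒢 0]|𝒢 i] =ᵐ[μ] μ[L j|𝒢 i] :=
        condExp_condExp_of_le (𝒢.mono h0i.le) (𝒢.le 0)
      have h3 : μ[μ[L j|𝒢 0]|𝒢 i] =ᵐ[μ] μ[L 0|𝒢 i] := condExp_congr_ae h1
      have hL0 : L 0 = fun ω => 1 - Mf 0 ω := by
        funext ω
        have h4 : min 0 (τ ω) = 0 := min_eq_left (hτpos ω)
        have h5 : Set.indicator {ω' | (0:ℝ) < τ ω'} (fun _ => (1:ℝ)) ω
            = 1 - Set.indicator {ω' | τ ω' ≤ (0:ℝ)} (fun _ => (1:ℝ)) ω := by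
          rcases le_or_gt (τ ω) 0 with h | h
          · rw [Set.indicator_of_notMem (by simp [not_lt.2 h]) _,
              Set.indicator_of_mem (Set.mem_setOf_eq ▸ h) _]
            norm_num
          · rw [Set.indicator_of_mem (Set.mem_setOf_eq ▸ h) _,
              Set.indicator_of_notMem (by simp [not_le.2 h]) _]
            norm_num
        simp only [hLdef, hMfdef, h4, h5, hΛ00 ω, Real.exp_zero, mul_one]
        ring
      have h6 : μ[L 0|𝒢 i] =ᵐ[μ] L i := by
        rw [hL0]
        have h7 : (fun ω => 1 - Mf 0 ω) = (fun _ : Ω => (1:ℝ)) - Mf 0 := by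
          funext ω
          simp [Pi.sub_apply]
        rw [h7]
        have h8 := condExp_sub (m := 𝒢 i) (μ := μ) (integrable_const (1:ℝ)) (hMint 0)
        refine h8.trans ?_
        have h9 : μ[Mf 0|𝒢 i] =ᵐ[μ] Mf i := hM.condExp_ae_eq h0i.le
        have h10 : μ[fun _ : Ω => (1:ℝ)|𝒢 i] = fun _ => (1:ℝ) := condExp_const (𝒢.le i) 1
        rw [h10, hMf_neg i h0i] at *
        filter_upwards [h9, hΛ0ae i h0i, hLneg i h0i] with ω hω hΛω hLω
        simp only [Pi.sub_apply, hω, hΛω, hLω]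
        norm_num
      exact h2.symm.trans (h3.trans h6)
    · have h1 : L j =ᵐ[μ] fun _ => (1:ℝ) := hLneg j h0j
      have h2 : μ[L j|𝒢 i] =ᵐ[μ] μ[fun _ : Ω => (1:ℝ)|𝒢 i] := condExp_congr_ae h1
      rw [condExp_const (𝒢.le i) (1:ℝ)] at h2
      exact h2.trans (hLneg i (lt_of_le_of_lt hij h0j)).symm
end

section
/- Orthogonality pricing formula: Let τ be a 𝔾 stopping time with intensity λ (i.e. M_t = 1_{t≥τ} − ∫₀^{t∧τ} λ_s ds is a 𝔾-martingale, λ bounded). Let X be a bounded random variable such that the martingale Z_t = E[X·exp(−∫₀^T λ_s ds) | 𝒢_t] is strongly orthogonal (in the L² sense) to M. Then for all t ≤ T: E[X·1_{τ>T} | 𝒢_t] = 1_{τ>t} · E[X·exp(−∫_t^T λ_s ds) | 𝒢_t]. -/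
open MeasureTheory Real Set

section Aux
variable {Ω : Type*} {m0 : MeasurableSpace Ω}

lemma op_slice_sm (𝒢 : Filtration ℝ m0) (lam : ℝ → Ω → ℝ) (hp : ProgMeasurable 𝒢 lam)
    (u : ℝ) (ω : Ω) :
    ∃ g : ℝ → ℝ, StronglyMeasurable g ∧ (∀ s ≤ u, g s = lam s ω)
      ∧ ∀ s, ∃ s', g s = lam s' ω := by
  refine ⟨fun s => lam (min s u) ω, ?_, fun s hs => by
    show lam (min s u) ω = lam s ω; rw [min_eq_left hs], fun s => ⟨min s u, rfl⟩⟩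
  have hc : @Measurable ℝ (Set.Iic u × Ω) _ (Subtype.instMeasurableSpace.prod (𝒢 u))
      (fun s : ℝ => ((⟨min s u, Set.mem_Iic.2 (min_le_right s u)⟩ : Set.Iic u), ω)) :=
    Measurable.prodMk ((measurable_id.min measurable_const).subtype_mk) measurable_const
  exact (hp u).comp_measurable hc

lemma op_intervalIntegrable (𝒢 : Filtration ℝ m0) (lam : ℝ → Ω → ℝ)
    (hp : ProgMeasurable 𝒢 lam) (Clam : ℝ)
    (hnn : ∀ s ω, 0 ≤ lam s ω) (hbdd : ∀ s ω, lam s ω ≤ Clam) (ω : Ω) (a b : ℝ) :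
    IntervalIntegrable (fun s => lam s ω) volume a b := by
  obtain ⟨g, hg, hgeq, hgrange⟩ := op_slice_sm 𝒢 lam hp (max a b) ω
  have hgi : IntervalIntegrable g volume a b := by
    refine (intervalIntegrable_const (c := Clam)).mono_fun hg.aestronglyMeasurable ?_
    refine Filter.Eventually.of_forall fun s => ?_
    obtain ⟨s', hs'⟩ := hgrange s
    have h1 : 0 ≤ g s := by rw [hs']; exact hnn _ ω
    have h2 : g s ≤ Clam := by rw [hs']; exact hbdd _ ω
    simp only [Real.norm_eq_abs]
    rw [abs_of_nonneg h1]
    exact h2.trans (le_abs_self _)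
  have hae : (fun s => lam s ω) =ᵐ[volume.restrict (Set.uIoc a b)] g := by
    refine (ae_restrict_iff' measurableSet_uIoc).2 (Filter.Eventually.of_forall fun s hs => ?_)
    exact (hgeq s hs.2).symm
  rw [intervalIntegrable_iff] at hgi ⊢
  exact hgi.congr hae.symm

lemma op_integral_nonneg {lam : ℝ → Ω → ℝ} (hnn : ∀ s ω, 0 ≤ lam s ω) (ω : Ω) {a b : ℝ}
    (hab : a ≤ b) : 0 ≤ ∫ s in a..b, lam s ω :=
  intervalIntegral.integral_nonneg hab fun s _ => hnn s ω

lemma op_integral_le (𝒢 : Filtration ℝ m0) {lam : ℝ → Ω → ℝ}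
    (hp : ProgMeasurable 𝒢 lam) {Clam : ℝ}
    (hnn : ∀ s ω, 0 ≤ lam s ω) (hbdd : ∀ s ω, lam s ω ≤ Clam) (ω : Ω) {a b : ℝ}
    (hab : a ≤ b) : ∫ s in a..b, lam s ω ≤ Clam * (b - a) := by
  have h := intervalIntegral.integral_mono_on hab
    (op_intervalIntegrable 𝒢 lam hp Clam hnn hbdd ω a b)
    (intervalIntegrable_const (c := Clam)) (fun s _ => hbdd s ω)
  simpa [mul_comm] using h

lemma op_meas_integral (𝒢 : Filtration ℝ m0) (lam : ℝ → Ω → ℝ)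
    (hp : ProgMeasurable 𝒢 lam) (u : ℝ) (hu : 0 ≤ u) :
    StronglyMeasurable[𝒢 u] (fun ω => ∫ s in (0:ℝ)..u, lam s ω) := by
  have hc : @Measurable (ℝ × Ω) (Set.Iic u × Ω) (Prod.instMeasurableSpace (m₂ := 𝒢 u))
      (Subtype.instMeasurableSpace.prod (𝒢 u))
      (fun p : ℝ × Ω => ((⟨min p.1 u, Set.mem_Iic.2 (min_le_right _ _)⟩ : Set.Iic u), p.2)) :=
    Measurable.prodMk ((measurable_fst.min measurable_const).subtype_mk) measurable_snd
  have h1 : StronglyMeasurable[(inferInstance : MeasurableSpace ℝ).prod (𝒢 u)]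
      (fun p : ℝ × Ω => lam (min p.1 u) p.2) := (hp u).comp_measurable hc
  have h2 := @MeasureTheory.StronglyMeasurable.integral_prod_left' ℝ Ω ℝ _ (𝒢 u)
    (volume.restrict (Set.Ioc (0:ℝ) u)) _ _ _ _ h1
  have h3 : (fun ω => ∫ s in (0:ℝ)..u, lam s ω)
      = fun ω => ∫ s in Set.Ioc (0:ℝ) u, lam (min s u) ω := by
    funext ω
    rw [intervalIntegral.integral_of_le hu]
    refine setIntegral_congr_fun measurableSet_Ioc fun s hs => ?_
    show lam s ω = lam (min s u) ω
    rw [min_eq_left hs.2]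
  rw [h3]
  exact h2

end Aux


set_option maxHeartbeats 4000000 in
/-- Orthogonality pricing formula: if the martingale `Z_t = E[X e^{−∫₀^T λ} | 𝒢_t]` is
strongly orthogonal to the compensated default indicator `M` (i.e. `Z·M` is a martingale),
then `E[X 1_{τ>T} | 𝒢_t] = 1_{τ>t} E[X e^{−∫_t^T λ} | 𝒢_t]` for all `t ≤ T`. -/
theorem orthogonality_pricing {Ω : Type*} {m0 : MeasurableSpace Ω}
    (μ : Measure Ω) [IsProbabilityMeasure μ]
    (𝒢 : Filtration ℝ m0) (τ : Ω → ℝ) (hτ : IsStoppingTime 𝒢 (fun ω => (τ ω : WithTop ℝ))) (hτpos : ∀ ω, 0 ≤ τ ω)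
    (lam : ℝ → Ω → ℝ) (hlam_nonneg : ∀ s ω, 0 ≤ lam s ω)
    (Clam : ℝ) (hlam_bdd : ∀ s ω, lam s ω ≤ Clam) (hlam_prog : ProgMeasurable 𝒢 lam)
    (hM : Martingale
      (fun t ω => Set.indicator {ω' | τ ω' ≤ t} (fun _ => (1 : ℝ)) ω
        - ∫ s in (0:ℝ)..(min t (τ ω)), lam s ω) 𝒢 μ)
    (T : ℝ) (hT : 0 ≤ T)
    (X : Ω → ℝ) (CX : ℝ) (hXbdd : ∀ ω, |X ω| ≤ CX) (hXmeas : Measurable X)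
    (horth : Martingale
      (fun t ω =>
        (μ[fun ω' => X ω' * Real.exp (-∫ s in (0:ℝ)..T, lam s ω') | 𝒢 t]) ω
          * (Set.indicator {ω' | τ ω' ≤ t} (fun _ => (1 : ℝ)) ω
              - ∫ s in (0:ℝ)..(min t (τ ω)), lam s ω)) 𝒢 μ) :
    ∀ t : ℝ, 0 ≤ t → t ≤ T →
      (μ[fun ω => X ω * Set.indicator {ω' | T < τ ω'} (fun _ => (1 : ℝ)) ω | 𝒢 t])
        =ᵐ[μ] fun ω =>
          Set.indicator {ω' | t < τ ω'} (fun _ => (1 : ℝ)) ω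
            * (μ[fun ω' => X ω' * Real.exp (-∫ s in t..T, lam s ω') | 𝒢 t]) ω := by
  intro t ht htT
  classical
  have hΩ : Nonempty Ω := by
    by_contra h
    rw [not_nonempty_iff] at h
    have h1 : μ Set.univ = 1 := measure_univ
    rw [Set.univ_eq_empty_iff.mpr h, measure_empty] at h1
    exact zero_ne_one h1
  obtain ⟨ω₀⟩ := hΩ
  have hClam : 0 ≤ Clam := (hlam_nonneg 0 ω₀).trans (hlam_bdd 0 ω₀)
  have hCX : 0 ≤ CX := (abs_nonneg _).trans (hXbdd ω₀)
  have hInt : ∀ (ω : Ω) (a b : ℝ), IntervalIntegrable (fun s => lam s ω) volume a b :=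
    op_intervalIntegrable 𝒢 lam hlam_prog Clam hlam_nonneg hlam_bdd
  have hsplit : ∀ (ω : Ω) (a b c : ℝ),
      (∫ s in a..b, lam s ω) + ∫ s in b..c, lam s ω = ∫ s in a..c, lam s ω :=
    fun ω a b c => intervalIntegral.integral_add_adjacent_intervals (hInt ω a b) (hInt ω b c)
  have hIn : ∀ (ω : Ω) {a b : ℝ}, a ≤ b → 0 ≤ ∫ s in a..b, lam s ω :=
    fun ω _ _ h => op_integral_nonneg hlam_nonneg ω h
  have hIle : ∀ (ω : Ω) {a b : ℝ}, a ≤ b → (∫ s in a..b, lam s ω) ≤ Clam * (b - a) :=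
    fun ω _ _ h => op_integral_le 𝒢 hlam_prog hlam_nonneg hlam_bdd ω h
  -- local definitions
  set Y : Ω → ℝ := fun ω => X ω * Real.exp (-∫ s in (0:ℝ)..T, lam s ω) with hYdef
  set Z : ℝ → Ω → ℝ := fun u => μ[Y|𝒢 u] with hZdef
  set Hh : ℝ → Ω → ℝ := fun u ω => Set.indicator {ω' | τ ω' ≤ u} (fun _ => (1:ℝ)) ω with hHdef
  set A : ℝ → Ω → ℝ := fun u ω => ∫ s in (0:ℝ)..(min u (τ ω)), lam s ω with hAdef
  set Mp : ℝ → Ω → ℝ := fun u ω => Hh u ω - A u ω with hMpdef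
  set L : ℝ → Ω → ℝ := fun u ω => Real.exp (A u ω) * (1 - Hh u ω) with hLdef
  -- basic values
  have hHval : ∀ u ω, Hh u ω = if τ ω ≤ u then 1 else 0 := fun u ω => by
    show Set.indicator {ω' | τ ω' ≤ u} (fun _ => (1:ℝ)) ω = _
    simp [Set.indicator_apply, Set.mem_setOf_eq]
  have hH01 : ∀ u ω, Hh u ω = 0 ∨ Hh u ω = 1 := fun u ω => by
    rw [hHval]
    split <;> simp
  -- A bounds
  have hAnn : ∀ u ω, 0 ≤ u → 0 ≤ A u ω := fun u ω hu =>
    hIn ω (le_min hu (hτpos ω))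
  have hAle : ∀ u ω, 0 ≤ u → A u ω ≤ Clam * u := fun u ω hu => by
    have h1 : A u ω ≤ Clam * (min u (τ ω) - 0) := hIle ω (le_min hu (hτpos ω))
    have h2 : Clam * (min u (τ ω) - 0) ≤ Clam * u := by
      have := min_le_left u (τ ω)
      nlinarith
    exact h1.trans h2
  -- measurability
  have hHsm : ∀ u, StronglyMeasurable[𝒢 u] (Hh u) := fun u =>
    stronglyMeasurable_const.indicator (by simpa using hτ u)
  have hMpsm : ∀ u, StronglyMeasurable[𝒢 u] (Mp u) := fun u => hM.stronglyAdapted u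
  have hAsm : ∀ u, StronglyMeasurable[𝒢 u] (A u) := fun u => by
    have h2 : Hh u - Mp u = A u := by
      funext ω
      show Hh u ω - Mp u ω = A u ω
      rw [hMpdef]
      exact sub_sub_cancel _ _
    exact h2 ▸ (hHsm u).sub (hMpsm u)
  have hLsm : ∀ u, StronglyMeasurable[𝒢 u] (L u) := fun u =>
    (Real.continuous_exp.comp_stronglyMeasurable (hAsm u)).mul
      (stronglyMeasurable_const.sub (hHsm u))
  have hZsm : ∀ u, StronglyMeasurable[𝒢 u] (Z u) := fun _ => stronglyMeasurable_condExp
  have hZaesm : ∀ u, AEStronglyMeasurable (Z u) μ := fun u =>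
    ((hZsm u).mono (𝒢.le u)).aestronglyMeasurable
  have hHaesm : ∀ u, AEStronglyMeasurable (Hh u) μ := fun u =>
    ((hHsm u).mono (𝒢.le u)).aestronglyMeasurable
  have hMpaesm : ∀ u, AEStronglyMeasurable (Mp u) μ := fun u =>
    ((hMpsm u).mono (𝒢.le u)).aestronglyMeasurable
  have hLaesm : ∀ u, AEStronglyMeasurable (L u) μ := fun u =>
    ((hLsm u).mono (𝒢.le u)).aestronglyMeasurable
  -- bounds
  have hLnn : ∀ u ω, 0 ≤ u → 0 ≤ L u ω := fun u ω hu => by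
    show 0 ≤ Real.exp (A u ω) * (1 - Hh u ω)
    rcases hH01 u ω with h | h <;> rw [h] <;> [skip; simp] <;> positivity
  have hLbdd : ∀ u ω, 0 ≤ u → u ≤ T → |L u ω| ≤ Real.exp (Clam * T) := fun u ω hu huT => by
    rw [abs_of_nonneg (hLnn u ω hu)]
    show Real.exp (A u ω) * (1 - Hh u ω) ≤ Real.exp (Clam * T)
    have h1 : Real.exp (A u ω) ≤ Real.exp (Clam * T) := by
      apply Real.exp_le_exp.2
      exact (hAle u ω hu).trans (by nlinarith)
    rcases hH01 u ω with h | h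
    · rw [h]; simpa using h1
    · rw [h]; simp; positivity
  have hMpbdd : ∀ u ω, 0 ≤ u → u ≤ T → |Mp u ω| ≤ 1 + Clam * T := fun u ω hu huT => by
    show |Hh u ω - A u ω| ≤ 1 + Clam * T
    have h1 := hAnn u ω hu
    have h2 := hAle u ω hu
    have h3 : Clam * u ≤ Clam * T := by nlinarith
    rw [abs_le]
    rcases hH01 u ω with h | h <;> rw [h] <;> constructor <;> nlinarith
  -- Y
  have hYsm : StronglyMeasurable Y := by
    have h := (op_meas_integral 𝒢 lam hlam_prog T hT).mono (𝒢.le T)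
    exact hXmeas.stronglyMeasurable.mul (Real.continuous_exp.comp_stronglyMeasurable h.neg)
  have hYbdd : ∀ ω, |Y ω| ≤ CX := fun ω => by
    rw [hYdef]
    rw [abs_mul, abs_of_nonneg (Real.exp_pos _).le]
    have h1 : Real.exp (-∫ s in (0:ℝ)..T, lam s ω) ≤ 1 := by
      rw [Real.exp_le_one_iff]
      simpa using hIn ω hT
    nlinarith [abs_nonneg (X ω), hXbdd ω]
  have hbint : ∀ (f : Ω → ℝ) (c : ℝ), AEStronglyMeasurable f μ →
      (∀ᵐ ω ∂μ, |f ω| ≤ c) → Integrable f μ := fun f c hf hb =>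
    (integrable_const c).mono' hf (by simpa [Real.norm_eq_abs] using hb)
  have hmulint : ∀ (f g : Ω → ℝ) (cf cg : ℝ), AEStronglyMeasurable f μ →
      AEStronglyMeasurable g μ → (∀ᵐ ω ∂μ, |f ω| ≤ cf) → (∀ᵐ ω ∂μ, |g ω| ≤ cg) →
      Integrable (fun ω => f ω * g ω) μ := by
    intro f g cf cg hf hg hbf hbg
    refine hbint _ (cf * cg) (hf.mul hg) ?_
    filter_upwards [hbf, hbg] with ω h1 h2
    rw [abs_mul]
    exact mul_le_mul h1 h2 (abs_nonneg _) ((abs_nonneg _).trans h1)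
  have hYint : Integrable Y μ := hbint Y CX hYsm.aestronglyMeasurable
    (Filter.Eventually.of_forall hYbdd)
  have hZbdd : ∀ u, ∀ᵐ ω ∂μ, |Z u ω| ≤ CX := fun u => by
    have h := ae_bdd_condExp_of_ae_bdd (μ := μ) (m := 𝒢 u) (R := ⟨CX, hCX⟩)
      (Filter.Eventually.of_forall fun ω => hYbdd ω)
    exact h
  have hZint : ∀ u, Integrable (Z u) μ := fun _ => integrable_condExp
  -- martingale facts
  have hZmart : ∀ a b : ℝ, a ≤ b → μ[Z b|𝒢 a] =ᵐ[μ] Z a := fun a b hab =>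
    condExp_condExp_of_le (𝒢.mono hab) (𝒢.le b)
  have hMmart : ∀ a b : ℝ, a ≤ b → μ[Mp b|𝒢 a] =ᵐ[μ] Mp a := fun a b hab =>
    hM.condExp_ae_eq hab
  have horthmart : ∀ a b : ℝ, a ≤ b →
      μ[fun ω => Z b ω * Mp b ω|𝒢 a] =ᵐ[μ] fun ω => Z a ω * Mp a ω := fun a b hab =>
    horth.condExp_ae_eq hab
  -- projection helper
  have hproj : ∀ (a : ℝ) (f : Ω → ℝ), t ≤ a → μ[f|𝒢 a] =ᵐ[μ] 0 → μ[f|𝒢 t] =ᵐ[μ] 0 :=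
    fun a f hta h =>
    (condExp_condExp_of_le (𝒢.mono hta) (𝒢.le a) (f := f)).symm.trans
      ((condExp_congr_ae h).trans (by rw [condExp_zero]))
  -- pull-out of L a
  have hpullL : ∀ (a : ℝ) (g : Ω → ℝ), 0 ≤ a → a ≤ T → Integrable g μ →
      (∃ cg, ∀ᵐ ω ∂μ, |g ω| ≤ cg) →
      μ[fun ω => L a ω * g ω|𝒢 a] =ᵐ[μ] fun ω => L a ω * (μ[g|𝒢 a]) ω := by
    intro a g ha haT hgint ⟨cg, hcg⟩
    exact condExp_mul_of_stronglyMeasurable_left (hLsm a)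
      (hmulint _ _ (Real.exp (Clam * T)) cg (hLaesm a) hgint.aestronglyMeasurable
        (Filter.Eventually.of_forall fun ω => hLbdd a ω ha haT) hcg) hgint
  -- key lemma 1 : E[(Z_b - Z_a) L_a | G_t] = 0
  have key1 : ∀ a b : ℝ, t ≤ a → a ≤ b → b ≤ T →
      μ[fun ω => L a ω * (Z b ω - Z a ω)|𝒢 t] =ᵐ[μ] 0 := by
    intro a b hta hab hbT
    have h0a : 0 ≤ a := ht.trans hta
    have haT : a ≤ T := hab.trans hbT
    have hzab : Integrable (fun ω => Z b ω - Z a ω) μ := (hZint b).sub (hZint a)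
    have habs : ∀ᵐ ω ∂μ, |Z b ω - Z a ω| ≤ CX + CX := by
      filter_upwards [hZbdd a, hZbdd b] with ω h1 h2
      exact (abs_sub _ _).trans (add_le_add h2 h1)
    have hz : μ[fun ω => Z b ω - Z a ω|𝒢 a] =ᵐ[μ] 0 := by
      have h1 := condExp_sub (μ := μ) (m := 𝒢 a) (hZint b) (hZint a)
      refine h1.trans ?_
      filter_upwards [hZmart a b hab, hZmart a a le_rfl] with ω e2 e3
      simp only [Pi.sub_apply, Pi.zero_apply]
      rw [e2, e3, sub_self]
    have h := hpullL a (fun ω => Z b ω - Z a ω) h0a haT hzab ⟨CX + CX, habs⟩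
    refine hproj a _ hta (h.trans ?_)
    filter_upwards [hz] with ω e
    simp only [Pi.zero_apply] at e ⊢
    rw [e, mul_zero]
  -- key lemma 2 : E[Z_b L_a (M_b - M_a) | G_t] = 0
  have key2 : ∀ a b : ℝ, t ≤ a → a ≤ b → b ≤ T →
      μ[fun ω => L a ω * (Z b ω * (Mp b ω - Mp a ω))|𝒢 t] =ᵐ[μ] 0 := by
    intro a b hta hab hbT
    have h0a : 0 ≤ a := ht.trans hta
    have h0b : 0 ≤ b := h0a.trans hab
    have haT : a ≤ T := hab.trans hbT
    have hZbMb : Integrable (fun ω => Z b ω * Mp b ω) μ :=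
      hmulint _ _ CX (1 + Clam * T) (hZaesm b) (hMpaesm b) (hZbdd b)
        (Filter.Eventually.of_forall fun ω => hMpbdd b ω h0b hbT)
    have hZbMa : Integrable (fun ω => Z b ω * Mp a ω) μ :=
      hmulint _ _ CX (1 + Clam * T) (hZaesm b) (hMpaesm a) (hZbdd b)
        (Filter.Eventually.of_forall fun ω => hMpbdd a ω h0a haT)
    have hMabs : ∀ᵐ ω ∂μ, |Mp b ω - Mp a ω| ≤ (1 + Clam * T) + (1 + Clam * T) :=
      Filter.Eventually.of_forall fun ω =>
        (abs_sub _ _).trans (add_le_add (hMpbdd b ω h0b hbT) (hMpbdd a ω h0a haT))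
    have hinner_int : Integrable (fun ω => Z b ω * (Mp b ω - Mp a ω)) μ :=
      hmulint _ _ CX ((1 + Clam * T) + (1 + Clam * T)) (hZaesm b)
        ((hMpaesm b).sub (hMpaesm a)) (hZbdd b) hMabs
    have hinner_abs : ∀ᵐ ω ∂μ, |Z b ω * (Mp b ω - Mp a ω)| ≤ CX * ((1 + Clam * T) + (1 + Clam * T)) := by
      filter_upwards [hZbdd b, hMabs] with ω h1 h2
      rw [abs_mul]
      exact mul_le_mul h1 h2 (abs_nonneg _) ((abs_nonneg _).trans h1)
    have hz : μ[fun ω => Z b ω * (Mp b ω - Mp a ω)|𝒢 a] =ᵐ[μ] 0 := by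
      have e1 : μ[fun ω => Z b ω * (Mp b ω - Mp a ω)|𝒢 a]
          =ᵐ[μ] μ[fun ω => Z b ω * Mp b ω - Z b ω * Mp a ω|𝒢 a] :=
        condExp_congr_ae (Filter.Eventually.of_forall fun ω => mul_sub _ _ _)
      have e2 := condExp_sub (μ := μ) (m := 𝒢 a) hZbMb hZbMa
      have e3 := horthmart a b hab
      have e4 : μ[fun ω => Z b ω * Mp a ω|𝒢 a] =ᵐ[μ] fun ω => Mp a ω * Z a ω := by
        have c0 : (fun ω => Z b ω * Mp a ω) = fun ω => Mp a ω * Z b ω :=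
          funext fun ω => mul_comm _ _
        rw [c0]
        have c2 := condExp_mul_of_stronglyMeasurable_left (hMpsm a)
          (hmulint _ _ (1 + Clam * T) CX (hMpaesm a) (hZaesm b)
            (Filter.Eventually.of_forall fun ω => hMpbdd a ω h0a haT) (hZbdd b))
          (hZint b)
        refine c2.trans ?_
        filter_upwards [hZmart a b hab] with ω e
        simp only [Pi.mul_apply]
        rw [e]
      refine (e1.trans (e2.trans ?_))
      filter_upwards [e3, e4] with ω f3 f4
      simp only [Pi.sub_apply, Pi.zero_apply]
      rw [f3, f4]
      ring
    have h := hpullL a (fun ω => Z b ω * (Mp b ω - Mp a ω)) h0a haT hinner_int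
      ⟨CX * ((1 + Clam * T) + (1 + Clam * T)), hinner_abs⟩
    refine hproj a _ hta (h.trans ?_)
    filter_upwards [hz] with ω e
    simp only [Pi.zero_apply] at e ⊢
    rw [e, mul_zero]
  -- pointwise error bound
  have key3 : ∀ a b : ℝ, 0 ≤ a → a ≤ b → b ≤ T → ∀ ω,
      |L b ω - L a ω + L a ω * (Mp b ω - Mp a ω)|
        ≤ Real.exp (Clam * T) * Clam ^ 2 * (b - a) ^ 2
          + Real.exp (Clam * T) * Clam * (b - a) * (Hh b ω - Hh a ω) := by
    intro a b ha hab hbT ω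
    have haT : a ≤ T := hab.trans hbT
    have hb0 : 0 ≤ b := ha.trans hab
    have hE1 : Real.exp (A a ω) ≤ Real.exp (Clam * T) :=
      Real.exp_le_exp.2 ((hAle a ω ha).trans (by nlinarith))
    have hE2 : Real.exp (A b ω) ≤ Real.exp (Clam * T) :=
      Real.exp_le_exp.2 ((hAle b ω hb0).trans (by nlinarith))
    rcases le_or_gt (τ ω) a with hca | hca
    · -- τ ≤ a : everything zero
      have hHa : Hh a ω = 1 := by rw [hHval]; simp [hca]
      have hHb : Hh b ω = 1 := by rw [hHval]; simp [hca.trans hab]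
      have hAeq : A a ω = A b ω := by
        show (∫ s in (0:ℝ)..(min a (τ ω)), lam s ω) = ∫ s in (0:ℝ)..(min b (τ ω)), lam s ω
        rw [min_eq_right hca, min_eq_right (hca.trans hab)]
      have hLa : L a ω = 0 := by
        show Real.exp (A a ω) * (1 - Hh a ω) = 0
        rw [hHa]; ring
      have hLb : L b ω = 0 := by
        show Real.exp (A b ω) * (1 - Hh b ω) = 0
        rw [hHb]; ring
      have hMp : Mp b ω - Mp a ω = 0 := by
        show (Hh b ω - A b ω) - (Hh a ω - A a ω) = 0
        rw [hHa, hHb, hAeq]; ring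
      rw [hLa, hLb, hMp, hHa, hHb]
      simp
      positivity
    · rcases le_or_gt (τ ω) b with hcb | hcb
      · -- a < τ ≤ b : jump interval
        have hHa : Hh a ω = 0 := by rw [hHval]; simp [not_le.2 hca]
        have hHb : Hh b ω = 1 := by rw [hHval]; simp [hcb]
        have hAa : A a ω = ∫ s in (0:ℝ)..a, lam s ω := by
          show (∫ s in (0:ℝ)..(min a (τ ω)), lam s ω) = _
          rw [min_eq_left hca.le]
        have hAb : A b ω = ∫ s in (0:ℝ)..(τ ω), lam s ω := by
          show (∫ s in (0:ℝ)..(min b (τ ω)), lam s ω) = _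
          rw [min_eq_right hcb]
        have hD : A b ω - A a ω = ∫ s in a..(τ ω), lam s ω := by
          rw [hAa, hAb, ← hsplit ω 0 a (τ ω)]; ring
        have hD0 : 0 ≤ A b ω - A a ω := by rw [hD]; exact hIn ω hca.le
        have hD1 : A b ω - A a ω ≤ Clam * (b - a) := by
          rw [hD]
          exact (hIle ω hca.le).trans (by nlinarith)
        have hLa : L a ω = Real.exp (A a ω) := by
          show Real.exp (A a ω) * (1 - Hh a ω) = _
          rw [hHa]; ring
        have hLb : L b ω = 0 := by
          show Real.exp (A b ω) * (1 - Hh b ω) = 0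
          rw [hHb]; ring
        have hMp : Mp b ω - Mp a ω = 1 - (A b ω - A a ω) := by
          show (Hh b ω - A b ω) - (Hh a ω - A a ω) = _
          rw [hHa, hHb]; ring
        rw [hLa, hLb, hMp, hHa, hHb]
        have heq : (0 : ℝ) - Real.exp (A a ω) + Real.exp (A a ω) * (1 - (A b ω - A a ω))
            = -(Real.exp (A a ω) * (A b ω - A a ω)) := by ring
        rw [heq, abs_neg, abs_of_nonneg (by positivity)]
        have h2 : Real.exp (A a ω) * (A b ω - A a ω)
            ≤ Real.exp (Clam * T) * (Clam * (b - a)) := by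
          apply mul_le_mul hE1 hD1 hD0 (Real.exp_pos _).le
        have h3 : 0 ≤ Real.exp (Clam * T) * Clam ^ 2 * (b - a) ^ 2 := by positivity
        nlinarith [h2, h3]
      · -- b < τ : continuous part
        have hHa : Hh a ω = 0 := by rw [hHval]; simp [not_le.2 hca]
        have hHb : Hh b ω = 0 := by rw [hHval]; simp [not_le.2 hcb]
        have hAa : A a ω = ∫ s in (0:ℝ)..a, lam s ω := by
          show (∫ s in (0:ℝ)..(min a (τ ω)), lam s ω) = _
          rw [min_eq_left hca.le]
        have hAb : A b ω = ∫ s in (0:ℝ)..b, lam s ω := by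
          show (∫ s in (0:ℝ)..(min b (τ ω)), lam s ω) = _
          rw [min_eq_left hcb.le]
        have hD : A b ω - A a ω = ∫ s in a..b, lam s ω := by
          rw [hAa, hAb, ← hsplit ω 0 a b]; ring
        have hD0 : 0 ≤ A b ω - A a ω := by rw [hD]; exact hIn ω hab
        have hD1 : A b ω - A a ω ≤ Clam * (b - a) := by rw [hD]; exact hIle ω hab
        have hLa : L a ω = Real.exp (A a ω) := by
          show Real.exp (A a ω) * (1 - Hh a ω) = _
          rw [hHa]; ring
        have hLb : L b ω = Real.exp (A b ω) := by
          show Real.exp (A b ω) * (1 - Hh b ω) = _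
          rw [hHb]; ring
        have hMp : Mp b ω - Mp a ω = -(A b ω - A a ω) := by
          show (Hh b ω - A b ω) - (Hh a ω - A a ω) = _
          rw [hHa, hHb]; ring
        rw [hLa, hLb, hMp, hHa, hHb]
        have heq : Real.exp (A b ω) - Real.exp (A a ω) + Real.exp (A a ω) * -(A b ω - A a ω)
            = Real.exp (A b ω) - Real.exp (A a ω) - Real.exp (A a ω) * (A b ω - A a ω) := by
          ring
        rw [heq]
        have c1 : Real.exp (A a ω) * Real.exp (A b ω - A a ω) = Real.exp (A b ω) := by
          rw [← Real.exp_add]; ring_nf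
        have c2 : Real.exp (A b ω) * Real.exp (A a ω - A b ω) = Real.exp (A a ω) := by
          rw [← Real.exp_add]; ring_nf
        have c3 : (A b ω - A a ω) + 1 ≤ Real.exp (A b ω - A a ω) := Real.add_one_le_exp _
        have c4 : (A a ω - A b ω) + 1 ≤ Real.exp (A a ω - A b ω) := Real.add_one_le_exp _
        have hlow : 0 ≤ Real.exp (A b ω) - Real.exp (A a ω)
            - Real.exp (A a ω) * (A b ω - A a ω) := by
          have := mul_le_mul_of_nonneg_left c3 (Real.exp_pos (A a ω)).le
          linarith [c1]
        have d1 : Real.exp (A b ω) - Real.exp (A a ω)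
            ≤ (A b ω - A a ω) * Real.exp (A b ω) := by
          have := mul_le_mul_of_nonneg_left c4 (Real.exp_pos (A b ω)).le
          nlinarith [c2]
        have d2 : (A b ω - A a ω) * (Real.exp (A b ω) - Real.exp (A a ω))
            ≤ (A b ω - A a ω) * ((A b ω - A a ω) * Real.exp (A b ω)) :=
          mul_le_mul_of_nonneg_left d1 hD0
        have hup : Real.exp (A b ω) - Real.exp (A a ω)
            - Real.exp (A a ω) * (A b ω - A a ω)
            ≤ (A b ω - A a ω) ^ 2 * Real.exp (A b ω) := by nlinarith [d1, d2]
        rw [abs_of_nonneg hlow]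
        have h5 : (A b ω - A a ω) ^ 2 * Real.exp (A b ω)
            ≤ (Clam * (b - a)) ^ 2 * Real.exp (Clam * T) := by
          apply mul_le_mul _ hE2 (Real.exp_pos _).le (by positivity)
          exact pow_le_pow_left₀ hD0 hD1 2
        simp only [sub_zero]
        nlinarith [hup, h5]
  -- integrability of L and H
  have hLint : ∀ u, 0 ≤ u → u ≤ T → Integrable (L u) μ := fun u hu huT =>
    hbint _ (Real.exp (Clam * T)) (hLaesm u)
      (Filter.Eventually.of_forall fun ω => hLbdd u ω hu huT)
  have hHbdd : ∀ u ω, |Hh u ω| ≤ 1 := fun u ω => by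
    rcases hH01 u ω with h | h <;> rw [h] <;> norm_num
  have hHint : ∀ u, Integrable (Hh u) μ := fun u =>
    hbint _ 1 (hHaesm u) (Filter.Eventually.of_forall fun ω => hHbdd u ω)
  have hMpint : ∀ u, 0 ≤ u → u ≤ T → Integrable (Mp u) μ := fun u hu huT =>
    hbint _ (1 + Clam * T) (hMpaesm u)
      (Filter.Eventually.of_forall fun ω => hMpbdd u ω hu huT)
  have herrint : ∀ a b : ℝ, 0 ≤ a → a ≤ b → b ≤ T →
      Integrable (fun ω => L b ω - L a ω + L a ω * (Mp b ω - Mp a ω)) μ := by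
    intro a b ha hab hbT
    have haT : a ≤ T := hab.trans hbT
    have hb0 : 0 ≤ b := ha.trans hab
    exact ((hLint b hb0 hbT).sub (hLint a ha haT)).add
      (hmulint _ _ (Real.exp (Clam * T)) ((1 + Clam * T) + (1 + Clam * T)) (hLaesm a)
        ((hMpaesm b).sub (hMpaesm a))
        (Filter.Eventually.of_forall fun ω => hLbdd a ω ha haT)
        (Filter.Eventually.of_forall fun ω =>
          (abs_sub _ _).trans (add_le_add (hMpbdd b ω hb0 hbT) (hMpbdd a ω ha haT))))
  -- integrated error bound
  have key4 : ∀ a b : ℝ, 0 ≤ a → a ≤ b → b ≤ T →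
      (∫ ω, |L b ω - L a ω + L a ω * (Mp b ω - Mp a ω)| ∂μ)
        ≤ Real.exp (Clam * T) * Clam ^ 2 * (b - a) ^ 2
          + Real.exp (Clam * T) * Clam * (b - a)
            * ((∫ ω, Hh b ω ∂μ) - ∫ ω, Hh a ω ∂μ) := by
    intro a b ha hab hbT
    have h1 : (∫ ω, |L b ω - L a ω + L a ω * (Mp b ω - Mp a ω)| ∂μ)
        ≤ ∫ ω, (Real.exp (Clam * T) * Clam ^ 2 * (b - a) ^ 2
            + Real.exp (Clam * T) * Clam * (b - a) * (Hh b ω - Hh a ω)) ∂μ := by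
      have h2int : Integrable (fun ω => Real.exp (Clam * T) * Clam * (b - a)
          * (Hh b ω - Hh a ω)) μ := ((hHint b).sub (hHint a)).const_mul _
      exact integral_mono (herrint a b ha hab hbT).abs
        ((integrable_const _).add h2int) (key3 a b ha hab hbT)
    have h2int : Integrable (fun ω => Real.exp (Clam * T) * Clam * (b - a)
        * (Hh b ω - Hh a ω)) μ := ((hHint b).sub (hHint a)).const_mul _
    refine h1.trans (le_of_eq ?_)
    rw [integral_add (integrable_const _) h2int,
      integral_const, integral_const_mul, integral_sub (hHint b) (hHint a)]
    simp [measure_univ]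
  -- error boundedness (crude, for integrability)
  have herrbdd : ∀ a b : ℝ, 0 ≤ a → a ≤ b → b ≤ T → ∀ ω,
      |L b ω - L a ω + L a ω * (Mp b ω - Mp a ω)|
        ≤ Real.exp (Clam * T) * (2 + ((1 + Clam * T) + (1 + Clam * T))) := by
    intro a b ha hab hbT ω
    have haT : a ≤ T := hab.trans hbT
    have hb0 : 0 ≤ b := ha.trans hab
    have h1 := hLbdd a ω ha haT
    have h2 := hLbdd b ω hb0 hbT
    have h3 := hMpbdd a ω ha haT
    have h4 := hMpbdd b ω hb0 hbT
    have h5 : |L a ω * (Mp b ω - Mp a ω)| ≤ Real.exp (Clam * T) * ((1 + Clam * T) + (1 + Clam * T)) := by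
      rw [abs_mul]
      exact mul_le_mul h1 ((abs_sub _ _).trans (add_le_add h4 h3)) (abs_nonneg _)
        ((abs_nonneg _).trans h1)
    calc |L b ω - L a ω + L a ω * (Mp b ω - Mp a ω)|
        ≤ |L b ω - L a ω| + |L a ω * (Mp b ω - Mp a ω)| := abs_add_le _ _
      _ ≤ (|L b ω| + |L a ω|) + |L a ω * (Mp b ω - Mp a ω)| := by
          have := abs_sub (L b ω) (L a ω)
          linarith
      _ ≤ (Real.exp (Clam * T) + Real.exp (Clam * T))
            + Real.exp (Clam * T) * ((1 + Clam * T) + (1 + Clam * T)) := by linarith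
      _ ≤ Real.exp (Clam * T) * (2 + ((1 + Clam * T) + (1 + Clam * T))) := by ring_nf; linarith
  -- per-interval identity
  have claim : ∀ a b : ℝ, t ≤ a → a ≤ b → b ≤ T →
      μ[fun ω => Z b ω * L b ω - Z a ω * L a ω|𝒢 t]
        =ᵐ[μ] μ[fun ω => Z b ω * (L b ω - L a ω + L a ω * (Mp b ω - Mp a ω))|𝒢 t] := by
    intro a b hta hab hbT
    have h0a : 0 ≤ a := ht.trans hta
    have h0b : 0 ≤ b := h0a.trans hab
    have haT : a ≤ T := hab.trans hbT
    have i1 : Integrable (fun ω => Z b ω * (L b ω - L a ω + L a ω * (Mp b ω - Mp a ω))) μ :=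
      hmulint _ _ CX (Real.exp (Clam * T) * (2 + ((1 + Clam * T) + (1 + Clam * T))))
        (hZaesm b)
        (((hLaesm b).sub (hLaesm a)).add ((hLaesm a).mul ((hMpaesm b).sub (hMpaesm a))))
        (hZbdd b) (Filter.Eventually.of_forall (herrbdd a b h0a hab hbT))
    have i2 : Integrable (fun ω => L a ω * (Z b ω - Z a ω)) μ :=
      hmulint _ _ (Real.exp (Clam * T)) (CX + CX) (hLaesm a)
        ((hZaesm b).sub (hZaesm a))
        (Filter.Eventually.of_forall fun ω => hLbdd a ω h0a haT)
        (by filter_upwards [hZbdd a, hZbdd b] with ω f1 f2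
            exact (abs_sub _ _).trans (add_le_add f2 f1))
    have i3 : Integrable (fun ω => L a ω * (Z b ω * (Mp b ω - Mp a ω))) μ :=
      hmulint _ _ (Real.exp (Clam * T)) (CX * ((1 + Clam * T) + (1 + Clam * T))) (hLaesm a)
        ((hZaesm b).mul ((hMpaesm b).sub (hMpaesm a)))
        (Filter.Eventually.of_forall fun ω => hLbdd a ω h0a haT)
        (by filter_upwards [hZbdd b] with ω f1
            rw [abs_mul]
            exact mul_le_mul f1
              ((abs_sub _ _).trans (add_le_add (hMpbdd b ω h0b hbT) (hMpbdd a ω h0a haT)))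
              (abs_nonneg _) ((abs_nonneg _).trans f1))
    have hdec : (fun ω => Z b ω * L b ω - Z a ω * L a ω)
        = fun ω => Z b ω * (L b ω - L a ω + L a ω * (Mp b ω - Mp a ω))
            + (L a ω * (Z b ω - Z a ω) - L a ω * (Z b ω * (Mp b ω - Mp a ω))) :=
      funext fun ω => by ring
    rw [hdec]
    have e2 : μ[(fun ω => L a ω * (Z b ω - Z a ω))
        - fun ω => L a ω * (Z b ω * (Mp b ω - Mp a ω))|𝒢 t] =ᵐ[μ] 0 := by
      refine (condExp_sub i2 i3 _).trans ?_
      filter_upwards [key1 a b hta hab hbT, key2 a b hta hab hbT] with ω f1 f2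
      simp only [Pi.sub_apply, Pi.zero_apply] at f1 f2 ⊢
      rw [f1, f2, sub_zero]
    refine (condExp_add i1 (i2.sub i3) _).trans ?_
    filter_upwards [e2] with ω h
    simp only [Pi.add_apply, Pi.zero_apply] at h ⊢
    rw [h, add_zero]
  -- integrability of the products Z_u L_u
  have hZLint : ∀ u : ℝ, 0 ≤ u → u ≤ T → Integrable (fun ω => Z u ω * L u ω) μ :=
    fun u hu huT => hmulint _ _ CX (Real.exp (Clam * T)) (hZaesm u) (hLaesm u) (hZbdd u)
      (Filter.Eventually.of_forall fun ω => hLbdd u ω hu huT)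
  have hcondZL : μ[fun ω => Z t ω * L t ω|𝒢 t] = fun ω => Z t ω * L t ω :=
    condExp_of_stronglyMeasurable (𝒢.le t) ((hZsm t).mul (hLsm t)) (hZLint t ht htT)
  set W : Ω → ℝ :=
    fun ω => (μ[fun ω' => Z T ω' * L T ω'|𝒢 t]) ω - Z t ω * L t ω with hWdef
  have hWint : Integrable W μ := integrable_condExp.sub (hZLint t ht htT)
  have hWbound : ∀ n : ℕ, (∫ ω, |W ω| ∂μ)
      ≤ CX * (Real.exp (Clam * T) * Clam ^ 2 * (T - t) ^ 2
          + Real.exp (Clam * T) * Clam * (T - t)) / ((n : ℝ) + 1) := by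
    intro n
    set N : ℕ := n + 1 with hN
    have hNpos : 0 < (N : ℝ) := by positivity
    set δ : ℝ := (T - t) / (N : ℝ) with hδdef
    have hδnn : 0 ≤ δ := div_nonneg (by linarith) hNpos.le
    set u : ℕ → ℝ := fun i => t + i * δ with hudef
    have hu0 : u 0 = t := by simp [hudef]
    have huN : u N = T := by rw [hudef]; show t + N * δ = T; rw [hδdef]; field_simp; ring
    have hustep : ∀ i : ℕ, u (i + 1) = u i + δ := fun i => by
      rw [hudef]; show t + (↑(i+1)) * δ = t + ↑i * δ + δ; push_cast; ring
    have humono : ∀ i, u i ≤ u (i + 1) := fun i => by rw [hustep]; linarith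
    have hut : ∀ i, t ≤ u i := fun i => by
      rw [hudef]
      have : 0 ≤ (i : ℝ) * δ := by positivity
      show t ≤ t + ↑i * δ
      linarith
    have huT : ∀ i, i ≤ N → u i ≤ T := fun i hi => by
      have h1 : (i : ℝ) * δ ≤ N * δ :=
        mul_le_mul_of_nonneg_right (by exact_mod_cast hi) hδnn
      have h2 : u N = t + (N : ℝ) * δ := rfl
      rw [huN] at h2
      show t + (i : ℝ) * δ ≤ T
      linarith
    have hu0T : ∀ i, 0 ≤ u i := fun i => ht.trans (hut i)
    -- telescoping
    have htel : (fun ω => Z T ω * L T ω - Z t ω * L t ω)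
        = ∑ i ∈ Finset.range N,
            fun ω => Z (u (i+1)) ω * L (u (i+1)) ω - Z (u i) ω * L (u i) ω := by
      funext ω
      rw [Finset.sum_apply]
      rw [← hu0, ← huN]
      exact (Finset.sum_range_sub (fun i => Z (u i) ω * L (u i) ω) N).symm
    have hDint : ∀ i ∈ Finset.range N,
        Integrable (fun ω => Z (u (i+1)) ω * L (u (i+1)) ω - Z (u i) ω * L (u i) ω) μ := by
      intro i hi
      have hiN : i + 1 ≤ N := Finset.mem_range.1 hi
      exact (hZLint (u (i+1)) (hu0T _) (huT _ hiN)).sub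
        (hZLint (u i) (hu0T _) (huT _ (Nat.le_of_succ_le hiN)))
    have s0 : W =ᵐ[μ] μ[fun ω => Z T ω * L T ω - Z t ω * L t ω|𝒢 t] := by
      refine Filter.EventuallyEq.symm
        (((condExp_sub (hZLint T hT le_rfl) (hZLint t ht htT) _)).trans ?_)
      refine Filter.Eventually.of_forall fun ω => ?_
      simp only [Pi.sub_apply]
      rw [congrFun hcondZL ω]
    have s1 : μ[fun ω => Z T ω * L T ω - Z t ω * L t ω|𝒢 t]
        =ᵐ[μ] ∑ i ∈ Finset.range N,
          μ[fun ω => Z (u (i+1)) ω * L (u (i+1)) ω - Z (u i) ω * L (u i) ω|𝒢 t] := by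
      rw [htel]
      exact condExp_finsetSum hDint _
    have s2 : ∀ i ∈ Finset.range N,
        μ[fun ω => Z (u (i+1)) ω * L (u (i+1)) ω - Z (u i) ω * L (u i) ω|𝒢 t]
          =ᵐ[μ] μ[fun ω => Z (u (i+1)) ω
            * (L (u (i+1)) ω - L (u i) ω + L (u i) ω * (Mp (u (i+1)) ω - Mp (u i) ω))|𝒢 t] := by
      intro i hi
      have hiN : i + 1 ≤ N := Finset.mem_range.1 hi
      exact claim (u i) (u (i+1)) (hut i) (humono i) (huT _ hiN)
    have s3 : (∑ i ∈ Finset.range N,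
          μ[fun ω => Z (u (i+1)) ω * L (u (i+1)) ω - Z (u i) ω * L (u i) ω|𝒢 t])
        =ᵐ[μ] fun ω => ∑ i ∈ Finset.range N,
          (μ[fun ω' => Z (u (i+1)) ω'
            * (L (u (i+1)) ω' - L (u i) ω' + L (u i) ω' * (Mp (u (i+1)) ω' - Mp (u i) ω'))|𝒢 t]) ω := by
      have hae : ∀ᵐ ω ∂μ, ∀ i ∈ Finset.range N,
          (μ[fun ω => Z (u (i+1)) ω * L (u (i+1)) ω - Z (u i) ω * L (u i) ω|𝒢 t]) ω
            = (μ[fun ω' => Z (u (i+1)) ω'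
              * (L (u (i+1)) ω' - L (u i) ω' + L (u i) ω' * (Mp (u (i+1)) ω' - Mp (u i) ω'))|𝒢 t]) ω :=
        (ae_ball_iff (Finset.range N).countable_toSet).2 fun i hi => s2 i hi
      filter_upwards [hae] with ω h
      rw [Finset.sum_apply]
      exact Finset.sum_congr rfl fun i hi => h i hi
    have hWae : W =ᵐ[μ] fun ω => ∑ i ∈ Finset.range N,
        (μ[fun ω' => Z (u (i+1)) ω'
          * (L (u (i+1)) ω' - L (u i) ω' + L (u i) ω' * (Mp (u (i+1)) ω' - Mp (u i) ω'))|𝒢 t]) ω :=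
      s0.trans (s1.trans s3)
    -- now estimate the integral
    have herri : ∀ i ∈ Finset.range N,
        Integrable (fun ω => L (u (i+1)) ω - L (u i) ω
          + L (u i) ω * (Mp (u (i+1)) ω - Mp (u i) ω)) μ := fun i hi =>
      herrint (u i) (u (i+1)) (hu0T i) (humono i) (huT _ (Finset.mem_range.1 hi))
    have hprodi : ∀ i ∈ Finset.range N,
        Integrable (fun ω => Z (u (i+1)) ω * (L (u (i+1)) ω - L (u i) ω
          + L (u i) ω * (Mp (u (i+1)) ω - Mp (u i) ω))) μ := fun i hi =>
      hmulint _ _ CX (Real.exp (Clam * T) * (2 + ((1 + Clam * T) + (1 + Clam * T))))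
        (hZaesm _)
        (((hLaesm _).sub (hLaesm _)).add ((hLaesm _).mul ((hMpaesm _).sub (hMpaesm _))))
        (hZbdd _)
        (Filter.Eventually.of_forall
          (herrbdd (u i) (u (i+1)) (hu0T i) (humono i) (huT _ (Finset.mem_range.1 hi))))
    have step1 : (∫ ω, |W ω| ∂μ) = ∫ ω, |∑ i ∈ Finset.range N,
        (μ[fun ω' => Z (u (i+1)) ω'
          * (L (u (i+1)) ω' - L (u i) ω' + L (u i) ω' * (Mp (u (i+1)) ω' - Mp (u i) ω'))|𝒢 t]) ω| ∂μ :=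
      integral_congr_ae (hWae.fun_comp abs)
    have step2 : (∫ ω, |∑ i ∈ Finset.range N,
        (μ[fun ω' => Z (u (i+1)) ω'
          * (L (u (i+1)) ω' - L (u i) ω' + L (u i) ω' * (Mp (u (i+1)) ω' - Mp (u i) ω'))|𝒢 t]) ω| ∂μ)
        ≤ ∑ i ∈ Finset.range N, ∫ ω, |(μ[fun ω' => Z (u (i+1)) ω'
          * (L (u (i+1)) ω' - L (u i) ω' + L (u i) ω' * (Mp (u (i+1)) ω' - Mp (u i) ω'))|𝒢 t]) ω| ∂μ := by
      rw [← integral_finset_sum _ fun i _ => (integrable_condExp).abs]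
      refine integral_mono ?_ ?_ ?_
      · exact (integrable_finset_sum _ fun i _ => integrable_condExp).abs
      · exact integrable_finset_sum _ fun i _ => integrable_condExp.abs
      · intro ω
        exact Finset.abs_sum_le_sum_abs _ _
    have step3 : ∀ i ∈ Finset.range N,
        (∫ ω, |(μ[fun ω' => Z (u (i+1)) ω'
          * (L (u (i+1)) ω' - L (u i) ω' + L (u i) ω' * (Mp (u (i+1)) ω' - Mp (u i) ω'))|𝒢 t]) ω| ∂μ)
        ≤ CX * (Real.exp (Clam * T) * Clam ^ 2 * δ ^ 2
            + Real.exp (Clam * T) * Clam * δ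
              * ((∫ ω, Hh (u (i+1)) ω ∂μ) - ∫ ω, Hh (u i) ω ∂μ)) := by
      intro i hi
      have hiN : i + 1 ≤ N := Finset.mem_range.1 hi
      have h1 := integral_abs_condExp_le (μ := μ) (m := (𝒢 t : MeasurableSpace Ω))
        (fun ω' => Z (u (i+1)) ω'
          * (L (u (i+1)) ω' - L (u i) ω' + L (u i) ω' * (Mp (u (i+1)) ω' - Mp (u i) ω')))
      have h2 : (∫ ω, |Z (u (i+1)) ω * (L (u (i+1)) ω - L (u i) ω
          + L (u i) ω * (Mp (u (i+1)) ω - Mp (u i) ω))| ∂μ)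
          ≤ CX * ∫ ω, |L (u (i+1)) ω - L (u i) ω
            + L (u i) ω * (Mp (u (i+1)) ω - Mp (u i) ω)| ∂μ := by
        rw [← integral_const_mul]
        refine integral_mono_ae (hprodi i hi).abs
          ((herri i hi).abs.const_mul CX) ?_
        filter_upwards [hZbdd (u (i+1))] with ω h
        rw [abs_mul]
        exact mul_le_mul_of_nonneg_right h (abs_nonneg _) |>.trans le_rfl
      have h3 := key4 (u i) (u (i+1)) (hu0T i) (humono i) (huT _ hiN)
      have hδeq : u (i+1) - u i = δ := by rw [hustep]; ring
      rw [hδeq] at h3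
      calc (∫ ω, |(μ[fun ω' => Z (u (i+1)) ω'
            * (L (u (i+1)) ω' - L (u i) ω' + L (u i) ω' * (Mp (u (i+1)) ω' - Mp (u i) ω'))|𝒢 t]) ω| ∂μ)
          ≤ ∫ ω, |Z (u (i+1)) ω * (L (u (i+1)) ω - L (u i) ω
              + L (u i) ω * (Mp (u (i+1)) ω - Mp (u i) ω))| ∂μ := h1
        _ ≤ CX * ∫ ω, |L (u (i+1)) ω - L (u i) ω
              + L (u i) ω * (Mp (u (i+1)) ω - Mp (u i) ω)| ∂μ := h2
        _ ≤ CX * (Real.exp (Clam * T) * Clam ^ 2 * δ ^ 2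
              + Real.exp (Clam * T) * Clam * δ
                * ((∫ ω, Hh (u (i+1)) ω ∂μ) - ∫ ω, Hh (u i) ω ∂μ)) :=
            mul_le_mul_of_nonneg_left h3 hCX
    -- sum the bounds
    have hHT1 : (∫ ω, Hh (u N) ω ∂μ) ≤ 1 := by
      have := integral_mono (hHint (u N)) (integrable_const (1:ℝ))
        (fun ω => by rcases hH01 (u N) ω with h | h <;> rw [h] <;> norm_num)
      simpa [measure_univ] using this
    have hHt0 : 0 ≤ ∫ ω, Hh (u 0) ω ∂μ :=
      integral_nonneg fun ω => by rcases hH01 (u 0) ω with h | h <;> rw [h] <;> norm_num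
    have e1 : ∑ i ∈ Finset.range N,
        ((∫ ω, Hh (u (i+1)) ω ∂μ) - ∫ ω, Hh (u i) ω ∂μ)
          = (∫ ω, Hh (u N) ω ∂μ) - ∫ ω, Hh (u 0) ω ∂μ :=
      Finset.sum_range_sub (fun i => ∫ ω, Hh (u i) ω ∂μ) N
    have hsum : ∑ i ∈ Finset.range N, (CX * (Real.exp (Clam * T) * Clam ^ 2 * δ ^ 2
          + Real.exp (Clam * T) * Clam * δ
            * ((∫ ω, Hh (u (i+1)) ω ∂μ) - ∫ ω, Hh (u i) ω ∂μ)))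
        = (N : ℝ) * (CX * (Real.exp (Clam * T) * Clam ^ 2 * δ ^ 2))
          + (CX * (Real.exp (Clam * T) * Clam * δ))
            * ((∫ ω, Hh (u N) ω ∂μ) - ∫ ω, Hh (u 0) ω ∂μ) := by
      calc ∑ i ∈ Finset.range N, (CX * (Real.exp (Clam * T) * Clam ^ 2 * δ ^ 2
            + Real.exp (Clam * T) * Clam * δ
              * ((∫ ω, Hh (u (i+1)) ω ∂μ) - ∫ ω, Hh (u i) ω ∂μ)))
          = ∑ i ∈ Finset.range N, ((CX * (Real.exp (Clam * T) * Clam ^ 2 * δ ^ 2))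
              + (CX * (Real.exp (Clam * T) * Clam * δ))
                * ((∫ ω, Hh (u (i+1)) ω ∂μ) - ∫ ω, Hh (u i) ω ∂μ)) :=
            Finset.sum_congr rfl fun i _ => by ring
        _ = (Finset.range N).card • (CX * (Real.exp (Clam * T) * Clam ^ 2 * δ ^ 2))
              + ∑ i ∈ Finset.range N, (CX * (Real.exp (Clam * T) * Clam * δ))
                * ((∫ ω, Hh (u (i+1)) ω ∂μ) - ∫ ω, Hh (u i) ω ∂μ) := by
            rw [Finset.sum_add_distrib, Finset.sum_const]
        _ = (N : ℝ) * (CX * (Real.exp (Clam * T) * Clam ^ 2 * δ ^ 2))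
              + (CX * (Real.exp (Clam * T) * Clam * δ))
                * ∑ i ∈ Finset.range N,
                  ((∫ ω, Hh (u (i+1)) ω ∂μ) - ∫ ω, Hh (u i) ω ∂μ) := by
            rw [Finset.card_range, nsmul_eq_mul, ← Finset.mul_sum]
        _ = _ := by rw [e1]
    have hNval : (N : ℝ) = (n : ℝ) + 1 := by rw [hN]; push_cast; ring
    have id1 : (N : ℝ) * (CX * (Real.exp (Clam * T) * Clam ^ 2 * δ ^ 2))
        = CX * (Real.exp (Clam * T) * Clam ^ 2 * (T - t) ^ 2) / (N : ℝ) := by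
      rw [hδdef]; field_simp
    have id2 : CX * (Real.exp (Clam * T) * Clam * δ)
        = CX * (Real.exp (Clam * T) * Clam * (T - t)) / (N : ℝ) := by
      rw [hδdef]; ring
    have hB0 : 0 ≤ CX * (Real.exp (Clam * T) * Clam * (T - t)) / (N : ℝ) := by
      have h1 : 0 ≤ Clam * (T - t) := mul_nonneg hClam (by linarith)
      have h2 : 0 ≤ Real.exp (Clam * T) * (Clam * (T - t)) :=
        mul_nonneg (Real.exp_pos _).le h1
      have h3 : 0 ≤ CX * (Real.exp (Clam * T) * Clam * (T - t)) := by nlinarith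
      positivity
    calc (∫ ω, |W ω| ∂μ)
        = ∫ ω, |∑ i ∈ Finset.range N,
            (μ[fun ω' => Z (u (i+1)) ω' * (L (u (i+1)) ω' - L (u i) ω'
              + L (u i) ω' * (Mp (u (i+1)) ω' - Mp (u i) ω'))|𝒢 t]) ω| ∂μ := step1
      _ ≤ ∑ i ∈ Finset.range N, ∫ ω, |(μ[fun ω' => Z (u (i+1)) ω'
            * (L (u (i+1)) ω' - L (u i) ω'
              + L (u i) ω' * (Mp (u (i+1)) ω' - Mp (u i) ω'))|𝒢 t]) ω| ∂μ := step2
      _ ≤ ∑ i ∈ Finset.range N, (CX * (Real.exp (Clam * T) * Clam ^ 2 * δ ^ 2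
            + Real.exp (Clam * T) * Clam * δ
              * ((∫ ω, Hh (u (i+1)) ω ∂μ) - ∫ ω, Hh (u i) ω ∂μ))) :=
          Finset.sum_le_sum step3
      _ = (N : ℝ) * (CX * (Real.exp (Clam * T) * Clam ^ 2 * δ ^ 2))
            + (CX * (Real.exp (Clam * T) * Clam * δ))
              * ((∫ ω, Hh (u N) ω ∂μ) - ∫ ω, Hh (u 0) ω ∂μ) := hsum
      _ ≤ CX * (Real.exp (Clam * T) * Clam ^ 2 * (T - t) ^ 2) / (N : ℝ)
            + CX * (Real.exp (Clam * T) * Clam * (T - t)) / (N : ℝ) := by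
          rw [id1, id2]
          refine add_le_add_right ?_ _
          refine mul_le_of_le_one_right hB0 ?_
          linarith
      _ = CX * (Real.exp (Clam * T) * Clam ^ 2 * (T - t) ^ 2
            + Real.exp (Clam * T) * Clam * (T - t)) / ((n : ℝ) + 1) := by
          rw [← hNval]; ring
  -- conclude W = 0 a.e.
  have hWzero : W =ᵐ[μ] 0 := by
    have hlim : Filter.Tendsto (fun n : ℕ => CX * (Real.exp (Clam * T) * Clam ^ 2 * (T - t) ^ 2
        + Real.exp (Clam * T) * Clam * (T - t)) * (1 / ((n : ℝ) + 1))) Filter.atTop (nhds 0) := by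
      have := tendsto_one_div_add_atTop_nhds_zero_nat.const_mul
        (CX * (Real.exp (Clam * T) * Clam ^ 2 * (T - t) ^ 2
          + Real.exp (Clam * T) * Clam * (T - t)))
      simpa using this
    have hle : (∫ ω, |W ω| ∂μ) ≤ 0 := by
      refine ge_of_tendsto' hlim fun n => ?_
      have := hWbound n
      calc (∫ ω, |W ω| ∂μ)
          ≤ CX * (Real.exp (Clam * T) * Clam ^ 2 * (T - t) ^ 2
              + Real.exp (Clam * T) * Clam * (T - t)) / ((n : ℝ) + 1) := this
        _ = CX * (Real.exp (Clam * T) * Clam ^ 2 * (T - t) ^ 2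
              + Real.exp (Clam * T) * Clam * (T - t)) * (1 / ((n : ℝ) + 1)) := by ring
    have heq : (∫ ω, |W ω| ∂μ) = 0 :=
      le_antisymm hle (integral_nonneg fun ω => abs_nonneg _)
    have h3 := (integral_eq_zero_iff_of_nonneg (fun ω => abs_nonneg (W ω)) hWint.abs).1 heq
    filter_upwards [h3] with ω h
    have : |W ω| = 0 := h
    simpa [abs_eq_zero] using this
  have main : μ[fun ω' => Z T ω' * L T ω'|𝒢 t] =ᵐ[μ] fun ω => Z t ω * L t ω := by
    filter_upwards [hWzero] with ω h
    have h2 : W ω = 0 := h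
    have h3 : (μ[fun ω' => Z T ω' * L T ω'|𝒢 t]) ω - Z t ω * L t ω = 0 := h2
    linarith
  -- final assembly
  have hstepa : (fun ω => X ω * Set.indicator {ω' | T < τ ω'} (fun _ => (1:ℝ)) ω)
      = fun ω => L T ω * Y ω := by
    funext ω
    have hind : Set.indicator {ω' | T < τ ω'} (fun _ => (1:ℝ)) ω
        = if T < τ ω then 1 else 0 := by
      simp [Set.indicator_apply, Set.mem_setOf_eq]
    rw [hind]
    rcases lt_or_ge T (τ ω) with hc | hc
    · have hH : Hh T ω = 0 := by rw [hHval]; simp [not_le.2 hc]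
      have hA : A T ω = ∫ s in (0:ℝ)..T, lam s ω := by
        show (∫ s in (0:ℝ)..(min T (τ ω)), lam s ω) = _
        rw [min_eq_left hc.le]
      rw [if_pos hc]
      show X ω * 1 = Real.exp (A T ω) * (1 - Hh T ω)
        * (X ω * Real.exp (-∫ s in (0:ℝ)..T, lam s ω))
      rw [hH, hA]
      have hx : Real.exp (∫ s in (0:ℝ)..T, lam s ω)
          * Real.exp (-∫ s in (0:ℝ)..T, lam s ω) = 1 := by
        rw [← Real.exp_add]
        simp
      linear_combination (-(X ω)) * hx
    · have hH : Hh T ω = 1 := by rw [hHval]; simp [hc]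
      rw [if_neg (not_lt.2 hc)]
      show X ω * 0 = Real.exp (A T ω) * (1 - Hh T ω) * Y ω
      rw [hH]; ring
  have hb2 : μ[fun ω => L T ω * Y ω|𝒢 T] =ᵐ[μ] fun ω => L T ω * Z T ω :=
    condExp_mul_of_stronglyMeasurable_left (hLsm T)
      (hmulint (L T) Y (Real.exp (Clam * T)) CX (hLaesm T) hYsm.aestronglyMeasurable
        (Filter.Eventually.of_forall fun ω => hLbdd T ω hT le_rfl)
        (Filter.Eventually.of_forall hYbdd)) hYint
  have hb3 : μ[fun ω => L T ω * Y ω|𝒢 t] =ᵐ[μ] μ[fun ω => L T ω * Z T ω|𝒢 t] :=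
    (condExp_condExp_of_le (𝒢.mono htT) (𝒢.le T)).symm.trans (condExp_congr_ae hb2)
  have hb4 : μ[fun ω => L T ω * Z T ω|𝒢 t] =ᵐ[μ] μ[fun ω' => Z T ω' * L T ω'|𝒢 t] :=
    condExp_congr_ae (Filter.Eventually.of_forall fun ω => mul_comm _ _)
  -- right-hand side computation
  have hc1 : (fun ω' => X ω' * Real.exp (-∫ s in t..T, lam s ω'))
      = fun ω => Real.exp (∫ s in (0:ℝ)..t, lam s ω) * Y ω := by
    funext ω
    have h := hsplit ω 0 t T
    show X ω * Real.exp (-∫ s in t..T, lam s ω)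
      = Real.exp (∫ s in (0:ℝ)..t, lam s ω)
        * (X ω * Real.exp (-∫ s in (0:ℝ)..T, lam s ω))
    have hx : Real.exp (∫ s in (0:ℝ)..t, lam s ω)
        * Real.exp (-∫ s in (0:ℝ)..T, lam s ω)
        = Real.exp (-∫ s in t..T, lam s ω) := by
      rw [← Real.exp_add]
      congr 1
      linarith
    linear_combination (-(X ω)) * hx
  have hEsm : StronglyMeasurable[𝒢 t] (fun ω => Real.exp (∫ s in (0:ℝ)..t, lam s ω)) :=
    Real.continuous_exp.comp_stronglyMeasurable (op_meas_integral 𝒢 lam hlam_prog t ht)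
  have hEbdd : ∀ ω, |Real.exp (∫ s in (0:ℝ)..t, lam s ω)| ≤ Real.exp (Clam * T) := by
    intro ω
    rw [abs_of_pos (Real.exp_pos _)]
    apply Real.exp_le_exp.2
    have h1 := hIle ω (show (0:ℝ) ≤ t from ht)
    nlinarith
  have hc2 : μ[fun ω' => X ω' * Real.exp (-∫ s in t..T, lam s ω')|𝒢 t]
      =ᵐ[μ] fun ω => Real.exp (∫ s in (0:ℝ)..t, lam s ω) * Z t ω := by
    rw [hc1]
    exact condExp_mul_of_stronglyMeasurable_left hEsm
      (hmulint _ _ (Real.exp (Clam * T)) CX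
        ((hEsm.mono (𝒢.le t)).aestronglyMeasurable) hYsm.aestronglyMeasurable
        (Filter.Eventually.of_forall hEbdd) (Filter.Eventually.of_forall hYbdd)) hYint
  have hfinal : (fun ω => Z t ω * L t ω) =ᵐ[μ] fun ω =>
      Set.indicator {ω' | t < τ ω'} (fun _ => (1:ℝ)) ω
        * (μ[fun ω' => X ω' * Real.exp (-∫ s in t..T, lam s ω')|𝒢 t]) ω := by
    filter_upwards [hc2] with ω h
    rw [h]
    have hind : Set.indicator {ω' | t < τ ω'} (fun _ => (1:ℝ)) ω
        = if t < τ ω then 1 else 0 := by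
      simp [Set.indicator_apply, Set.mem_setOf_eq]
    rcases lt_or_ge t (τ ω) with hcc | hcc
    · have hH : Hh t ω = 0 := by rw [hHval]; simp [not_le.2 hcc]
      have hA : A t ω = ∫ s in (0:ℝ)..t, lam s ω := by
        show (∫ s in (0:ℝ)..(min t (τ ω)), lam s ω) = _
        rw [min_eq_left hcc.le]
      rw [hind, if_pos hcc]
      show Z t ω * (Real.exp (A t ω) * (1 - Hh t ω))
        = 1 * (Real.exp (∫ s in (0:ℝ)..t, lam s ω) * Z t ω)
      rw [hH, hA]; ring
    · have hH : Hh t ω = 1 := by rw [hHval]; simp [hcc]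
      rw [hind, if_neg (not_lt.2 hcc)]
      show Z t ω * (Real.exp (A t ω) * (1 - Hh t ω))
        = 0 * (Real.exp (∫ s in (0:ℝ)..t, lam s ω) * Z t ω)
      rw [hH]; ring
  rw [hstepa]
  exact (hb3.trans (hb4.trans main)).trans hfinal
end

section
/- In the BVE Cox framework with λ¹_t ≠ λ²_t a.e. (so the max is differentiable a.e.), the 𝔾 intensity of τ = τ¹∧τ² is λ_t = λ¹_t + λ²_t + γ·(λ¹_t ∨ λ²_t on the active branch), and in particular differs from the conditionally-independent intensity λ¹_t + λ²_t; more precisely d/dt[−log G(t,t)] = λ¹_t + λ²_t + γ·λ^{i*}_t where i* = argmax_i ∫₀^t λⁱ_s ds. -/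
open MeasureTheory Real Set Filter Topology

private lemma aux_ftc (f : ℝ → ℝ) (hf : Continuous f) (t : ℝ) :
    HasDerivAt (fun u => ∫ s in (0:ℝ)..u, f s) (f t) t :=
  intervalIntegral.integral_hasDerivAt_right (hf.intervalIntegrable _ _)
    (hf.stronglyMeasurableAtFilter _ _) hf.continuousAt

/-- In the BVE Cox framework with `λ¹_t ≠ λ²_t` a.e., the `𝔾` intensity of `τ = τ¹∧τ²` is
`λ_t = λ¹_t + λ²_t + γ·λ^{i*}_t` where `i* = argmax_i ∫₀^t λⁱ`:
`d/dt[−log G(t,t)] = λ¹_t + λ²_t + γ·λ^{i*}_t`, which differs from the conditionally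
independent intensity `λ¹_t + λ²_t`. -/
theorem bve_cox_intensity {Ω : Type*} {m0 : MeasurableSpace Ω} (μ : Measure Ω)
    [IsProbabilityMeasure μ]
    (F : Filtration ℝ m0)
    (lam1 lam2 : ℝ → Ω → ℝ)
    (hlam1_nonneg : ∀ s ω, 0 ≤ lam1 s ω) (hlam2_nonneg : ∀ s ω, 0 ≤ lam2 s ω)
    (C : ℝ) (hlam1_bdd : ∀ s ω, lam1 s ω ≤ C) (hlam2_bdd : ∀ s ω, lam2 s ω ≤ C)
    (hlam1_cont : ∀ ω, Continuous fun s => lam1 s ω)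
    (hlam2_cont : ∀ ω, Continuous fun s => lam2 s ω)
    (hlam1_prog : ProgMeasurable F lam1) (hlam2_prog : ProgMeasurable F lam2)
    (hne : ∀ ω, ∀ᵐ t ∂(MeasureTheory.volume : Measure ℝ), lam1 t ω ≠ lam2 t ω)
    (γ : ℝ) (hγ : 0 < γ)
    (G : ℝ → Ω → ℝ)
    (hG : ∀ t ω, G t ω
      = Real.exp (-(∫ s in (0:ℝ)..t, (lam1 s ω + lam2 s ω))
          - γ * max (∫ s in (0:ℝ)..t, lam1 s ω) (∫ s in (0:ℝ)..t, lam2 s ω))) :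
    ∀ ω, ∀ᵐ t ∂((MeasureTheory.volume : Measure ℝ).restrict (Set.Ioi (0:ℝ))),
      HasDerivAt (fun u => -Real.log (G u ω))
        (lam1 t ω + lam2 t ω
          + γ * (if (∫ s in (0:ℝ)..t, lam2 s ω) ≤ (∫ s in (0:ℝ)..t, lam1 s ω)
                  then lam1 t ω else lam2 t ω)) t ∧
      (γ * (if (∫ s in (0:ℝ)..t, lam2 s ω) ≤ (∫ s in (0:ℝ)..t, lam1 s ω)
              then lam1 t ω else lam2 t ω) ≠ 0 →
        lam1 t ω + lam2 t ω
          + γ * (if (∫ s in (0:ℝ)..t, lam2 s ω) ≤ (∫ s in (0:ℝ)..t, lam1 s ω)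
                  then lam1 t ω else lam2 t ω) ≠ lam1 t ω + lam2 t ω) := by
  intro ω
  set I1 : ℝ → ℝ := fun u => ∫ s in (0:ℝ)..u, lam1 s ω with hI1def
  set I2 : ℝ → ℝ := fun u => ∫ s in (0:ℝ)..u, lam2 s ω with hI2def
  have hd1 : ∀ t, HasDerivAt I1 (lam1 t ω) t := aux_ftc _ (hlam1_cont ω)
  have hd2 : ∀ t, HasDerivAt I2 (lam2 t ω) t := aux_ftc _ (hlam2_cont ω)
  have hdf : ∀ t, HasDerivAt (fun u => I1 u - I2 u) (lam1 t ω - lam2 t ω) t :=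
    fun t => (hd1 t).sub (hd2 t)
  -- the set where the integrals agree but the intensities differ is countable
  set Z : Set ℝ := {t | I1 t = I2 t ∧ lam1 t ω ≠ lam2 t ω} with hZdef
  have hZc : Z.Countable := by
    have key : ∀ x ∈ Z, ({x} : Set ℝ) ∈ 𝓝[Z] x := by
      intro x hx
      have hev := (hdf x).eventually_ne (c := I1 x - I2 x) (sub_ne_zero.mpr hx.2)
      rw [eventually_nhdsWithin_iff] at hev
      rw [mem_nhdsWithin_iff_eventually]
      filter_upwards [hev] with z hz hzZ
      by_contra hzx
      have h1 : I1 z - I2 z ≠ I1 x - I2 x := hz (by simpa using hzx)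
      have h2 : I1 z - I2 z = 0 := sub_eq_zero.mpr hzZ.1
      have h3 : I1 x - I2 x = 0 := sub_eq_zero.mpr hx.1
      rw [h2, h3] at h1; exact h1 rfl
    obtain ⟨T, hTZ, hTc, hT⟩ := TopologicalSpace.countable_cover_nhdsWithin key
    refine hTc.mono ?_
    intro z hz
    obtain ⟨x, hx, hz'⟩ := mem_iUnion₂.1 (hT hz)
    rwa [mem_singleton_iff.1 hz']
  have hae : ∀ᵐ t ∂((volume : Measure ℝ).restrict (Set.Ioi (0:ℝ))), I1 t ≠ I2 t := by
    refine ae_restrict_of_ae ?_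
    have hne' := hne ω
    rw [ae_iff] at hne' ⊢
    refine measure_mono_null (fun t ht => ?_)
      (measure_union_null (hZc.measure_zero _) hne')
    simp only [not_not, mem_setOf_eq] at ht
    by_cases h : lam1 t ω = lam2 t ω
    · exact Or.inr (by simpa using h)
    · exact Or.inl ⟨ht, h⟩
  have hlog : ∀ u, -Real.log (G u ω)
      = (∫ s in (0:ℝ)..u, (lam1 s ω + lam2 s ω)) + γ * max (I1 u) (I2 u) := by
    intro u
    rw [hG u ω, Real.log_exp]
    ring
  have hA : ∀ t, HasDerivAt (fun u => ∫ s in (0:ℝ)..u, (lam1 s ω + lam2 s ω))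
      (lam1 t ω + lam2 t ω) t := aux_ftc _ ((hlam1_cont ω).add (hlam2_cont ω))
  filter_upwards [hae] with t ht
  rcases ht.lt_or_gt with hlt | hlt
  · -- I1 t < I2 t : the max branch is I2
    have hcond : ¬ (I2 t ≤ I1 t) := not_le.mpr hlt
    have hev : ∀ᶠ u in 𝓝 t, I1 u < I2 u :=
      ContinuousAt.eventually_lt (hd1 t).continuousAt (hd2 t).continuousAt hlt
    have heq : (fun u => -Real.log (G u ω))
        =ᶠ[𝓝 t] fun u => (∫ s in (0:ℝ)..u, (lam1 s ω + lam2 s ω)) + γ * I2 u := by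
      filter_upwards [hev] with u hu
      rw [hlog u, max_eq_right hu.le]
    have hder : HasDerivAt (fun u => (∫ s in (0:ℝ)..u, (lam1 s ω + lam2 s ω)) + γ * I2 u)
        (lam1 t ω + lam2 t ω + γ * lam2 t ω) t := (hA t).add ((hd2 t).const_mul γ)
    rw [if_neg hcond]
    refine ⟨hder.congr_of_eventuallyEq heq, fun h0 hc => h0 (by linarith)⟩
  · -- I2 t < I1 t : the max branch is I1
    have hcond : I2 t ≤ I1 t := hlt.le
    have hev : ∀ᶠ u in 𝓝 t, I2 u < I1 u :=
      ContinuousAt.eventually_lt (hd2 t).continuousAt (hd1 t).continuousAt hlt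
    have heq : (fun u => -Real.log (G u ω))
        =ᶠ[𝓝 t] fun u => (∫ s in (0:ℝ)..u, (lam1 s ω + lam2 s ω)) + γ * I1 u := by
      filter_upwards [hev] with u hu
      rw [hlog u, max_eq_left hu.le]
    have hder : HasDerivAt (fun u => (∫ s in (0:ℝ)..u, (lam1 s ω + lam2 s ω)) + γ * I1 u)
        (lam1 t ω + lam2 t ω + γ * lam1 t ω) t := (hA t).add ((hd1 t).const_mul γ)
    rw [if_pos hcond]
    refine ⟨hder.congr_of_eventuallyEq heq, fun h0 hc => h0 (by linarith)⟩
end
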